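/- arXiv:2111.12168 — 7 statements merged into one kernel-verified Lean document; each statement's English description precedes it below -/
import Mathlib

section
/- Let D be an arc-locally in-semicomplete digraph whose vertex set is partitioned into (V₁, V₂, V₃) with V₁ ↦ V₂, V₁ ⇒ V₃, V₂ ⇒ V₃, D[V₂] an extended odd cycle of length at least five, and D[V₃] bipartite. Then the underlying graph of D[V₂ ∪ V₃] contains no cycle of length three. -/
open Set

namespace Paper

variable {V : Type*}

/-- `u` and `v` are adjacent in the underlying graph of the digraph `E`. -/
def Adj (E : V → V → Prop) (u v : V) : Prop := E u v ∨ E v u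

/-- A stable set: pairwise non-adjacent vertices. -/
def Stable (E : V → V → Prop) (S : Set V) : Prop :=
  ∀ u ∈ S, ∀ v ∈ S, u ≠ v → ¬ Adj E u v

/-- A stable set of the subdigraph induced by `W`. -/
def StableOn (E : V → V → Prop) (W S : Set V) : Prop := S ⊆ W ∧ Stable E S

/-- A maximum stable set of the subdigraph induced by `W`. -/
def MaxStableOn (E : V → V → Prop) (W S : Set V) : Prop :=
  StableOn E W S ∧ ∀ T, StableOn E W T → T.ncard ≤ S.ncard

/-- Neighborhood of `S`: vertices outside `S` adjacent to some vertex of `S`. -/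
def Nbhd (E : V → V → Prop) (S : Set V) : Set V :=
  {v | v ∉ S ∧ ∃ u ∈ S, Adj E u v}

/-- A (nonempty) directed path, as a list of vertices. -/
def IsPath (E : V → V → Prop) (p : List V) : Prop := p ≠ [] ∧ p.Chain' E

/-- A path partition of the vertex set `W` into vertex-disjoint directed paths. -/
def PathPartitionOn (E : V → V → Prop) (W : Set V) (P : List (List V)) : Prop :=
  (∀ p ∈ P, IsPath E p) ∧ P.flatten.Nodup ∧ ∀ v, v ∈ P.flatten ↔ v ∈ W

/-- `S` and `P` are orthogonal: each path contains exactly one vertex of `S`. -/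
def Orthogonal (S : Set V) (P : List (List V)) : Prop :=
  ∀ p ∈ P, ∃! v, v ∈ p ∧ v ∈ S

/-- An `S`-path partition of `W`. -/
def SPartOn (E : V → V → Prop) (W S : Set V) (P : List (List V)) : Prop :=
  PathPartitionOn E W P ∧ Orthogonal S P

/-- An `S_BE`-path partition of `W`: orthogonal and every vertex of `S` starts or
ends its path. -/
def BEPartOn (E : V → V → Prop) (W S : Set V) (P : List (List V)) : Prop :=
  SPartOn E W S P ∧ ∀ p ∈ P, ∀ v ∈ p, v ∈ S → p.head? = some v ∨ p.getLast? = some v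

/-- The induced subdigraph on `W` satisfies the α-property. -/
def AlphaPropOn (E : V → V → Prop) (W : Set V) : Prop :=
  ∀ S, MaxStableOn E W S → ∃ P, SPartOn E W S P

/-- The induced subdigraph on `W` satisfies the BE-property. -/
def BEPropOn (E : V → V → Prop) (W : Set V) : Prop :=
  ∀ S, MaxStableOn E W S → ∃ P, BEPartOn E W S P

/-- A matching (w.r.t. a symmetric-or-not adjacency `A`) whose edges go from `X`
to `Y`: pairwise vertex-disjoint edges. -/
def MatchingBetween (A : V → V → Prop) (X Y : Set V) (M : Set (V × V)) : Prop :=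
  (∀ e ∈ M, e.1 ∈ X ∧ e.2 ∈ Y ∧ A e.1 e.2) ∧
  (∀ e ∈ M, ∀ f ∈ M, e ≠ f →
    e.1 ≠ f.1 ∧ e.1 ≠ f.2 ∧ e.2 ≠ f.1 ∧ e.2 ≠ f.2)

/-- The matching `M` covers the set `X`. -/
def Covers (M : Set (V × V)) (X : Set V) : Prop :=
  ∀ x ∈ X, ∃ e ∈ M, e.1 = x ∨ e.2 = x

/-- Arc-locally in-semicomplete digraph. -/
def ArcLocallyInSemicomplete (E : V → V → Prop) : Prop :=
  ∀ u v, E u v → ∀ a b, E a u → E b v → a = b ∨ Adj E a b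

/-- `A ↦ B`: every vertex of `A` dominates every vertex of `B`, and no edge from
`B` to `A`. -/
def Domin (E : V → V → Prop) (A B : Set V) : Prop :=
  (∀ a ∈ A, ∀ b ∈ B, E a b) ∧ ∀ a ∈ A, ∀ b ∈ B, ¬ E b a

/-- `A ⇒ B`: there is no edge from `B` to `A`. -/
def NoBack (E : V → V → Prop) (A B : Set V) : Prop :=
  ∀ a ∈ A, ∀ b ∈ B, ¬ E b a

/-- The induced subdigraph on `W` has bipartite underlying graph. -/
def BipartiteOn (E : V → V → Prop) (W : Set V) : Prop :=
  ∃ A B : Set V, A ∪ B = W ∧ Disjoint A B ∧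
    (∀ u ∈ A, ∀ v ∈ A, ¬ Adj E u v) ∧ (∀ u ∈ B, ∀ v ∈ B, ¬ Adj E u v)

/-- There is a directed walk of length `n` from `u` to `v`. -/
def WalkLen (E : V → V → Prop) : ℕ → V → V → Prop
  | 0, u, v => u = v
  | n+1, u, v => ∃ w, E u w ∧ WalkLen E n w v

/-- The set of vertices at distance exactly `d` from the set `A`. -/
def Nd (E : V → V → Prop) (A : Set V) (d : ℕ) : Set V :=
  {v | (∃ u ∈ A, WalkLen E d u v) ∧ ∀ d' < d, ¬ ∃ u ∈ A, WalkLen E d' u v}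

/-- Out-neighborhood of a set: vertices outside `A` dominated by some vertex of `A`. -/
def NplusSet (E : V → V → Prop) (A : Set V) : Set V :=
  {v | v ∉ A ∧ ∃ u ∈ A, E u v}

/-- The induced subdigraph on `W` is the extended cycle `Q[X 0, …, X (k-1)]`. -/
def ExtCycleOn (E : V → V → Prop) (k : ℕ) (X : ZMod k → Set V) (W : Set V) : Prop :=
  (⋃ i, X i) = W ∧ (∀ i j, i ≠ j → Disjoint (X i) (X j)) ∧
  (∀ i, (X i).Nonempty) ∧ (∀ i, Stable E (X i)) ∧
  (∀ u ∈ W, ∀ v ∈ W, (E u v ↔ ∃ i, u ∈ X i ∧ v ∈ X (i + 1)))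

/-- The partition `(V₁,V₂,V₃)` from the structure theorem for arc-locally
in-semicomplete digraphs, with `D[V₂]` an odd extended cycle of length `k ≥ 5`. -/
def StructPartition (E : V → V → Prop) (V1 V2 V3 : Set V)
    (k : ℕ) (X : ZMod k → Set V) : Prop :=
  V1 ∪ V2 ∪ V3 = Set.univ ∧ Disjoint V1 V2 ∧ Disjoint V1 V3 ∧ Disjoint V2 V3 ∧
  Domin E V1 V2 ∧ NoBack E V1 V3 ∧ NoBack E V2 V3 ∧
  5 ≤ k ∧ Odd k ∧ ExtCycleOn E k X V2 ∧ BipartiteOn E V3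

/-- `D` contains an induced blocking odd cycle. -/
def HasInducedBlockingOddCycle (E : V → V → Prop) : Prop :=
  ∃ n : ℕ, Odd n ∧ 3 ≤ n ∧ ∃ f : ZMod n → V, Function.Injective f ∧
    (∀ i j : ZMod n, Adj E (f i) (f j) ↔ (j = i + 1 ∨ i = j + 1)) ∧
    (∀ i, ¬ E (f i) (f 0)) ∧ (∀ i, ¬ E (f 1) (f i))

/-- Stability number of the induced subdigraph on `W`. -/
noncomputable def alphaOn (E : V → V → Prop) (W : Set V) : ℕ :=
  sSup {n | ∃ S, StableOn E W S ∧ S.ncard = n}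

end Paper

section Aux

open Paper

variable {V : Type*} {E : V → V → Prop} {V2 V3 : Set V} {k : ℕ} {X : ZMod k → Set V}

lemma adjSymm {u v : V} (h : Adj E u v) : Adj E v u := Or.symm h

lemma zne {k : ℕ} (hk : 5 ≤ k) {p q : ℕ} (hp : p < 5) (hq : q < 5) (hpq : p ≠ q)
    {i : ZMod k} (h : i + (p : ZMod k) = i + (q : ZMod k)) : False := by
  haveI : NeZero k := ⟨by omega⟩
  have h2 : (p : ZMod k) = q := add_left_cancel h
  have h3 := congrArg ZMod.val h2
  rw [ZMod.val_natCast_of_lt (by omega), ZMod.val_natCast_of_lt (by omega)] at h3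
  omega

lemma classEq (hdis : ∀ i j : ZMod k, i ≠ j → Disjoint (X i) (X j))
    {a : V} {i j : ZMod k} (hi : a ∈ X i) (hj : a ∈ X j) : i = j := by
  by_contra h
  exact Set.disjoint_left.mp (hdis i j h) hi hj

lemma memV2 (hU : (⋃ i, X i) = V2) {a : V} {i : ZMod k} (ha : a ∈ X i) : a ∈ V2 := by
  rw [← hU]; exact Set.mem_iUnion.mpr ⟨i, ha⟩

lemma tri_V2_dir (hk : 5 ≤ k) (hcyc : ExtCycleOn E k X V2)
    {a b c : V} (hab : E a b) (hbc : Adj E b c) (hac : Adj E a c)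
    (hav2 : a ∈ V2) (hbv2 : b ∈ V2) (hcv2 : c ∈ V2) : False := by
  obtain ⟨hU, hdis, hne, -, hiff⟩ := hcyc
  obtain ⟨i, hai, hbi⟩ := (hiff a hav2 b hbv2).mp hab
  rcases hbc with hbc | hcb
  · obtain ⟨j, hbj, hcj⟩ := (hiff b hbv2 c hcv2).mp hbc
    have e1 : i + 1 = j := classEq hdis hbi hbj
    rcases hac with hac | hca
    · obtain ⟨m, ham, hcm⟩ := (hiff a hav2 c hcv2).mp hac
      have e2 : i = m := classEq hdis hai ham
      have e3 : j + 1 = m + 1 := classEq hdis hcj hcm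
      exact zne hk (p := 2) (q := 1) (by norm_num) (by norm_num) (by norm_num)
        (i := i) (by push_cast; linear_combination e1 + e3 - e2)
    · obtain ⟨m, hcm, ham⟩ := (hiff c hcv2 a hav2).mp hca
      have e2 : j + 1 = m := classEq hdis hcj hcm
      have e3 : m + 1 = i := classEq hdis ham hai
      exact zne hk (p := 0) (q := 3) (by norm_num) (by norm_num) (by norm_num)
        (i := i) (by push_cast; linear_combination -e1 - e2 - e3)
  · obtain ⟨j, hcj, hbj⟩ := (hiff c hcv2 b hbv2).mp hcb
    have e1 : i + 1 = j + 1 := classEq hdis hbi hbj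
    rcases hac with hac | hca
    · obtain ⟨m, ham, hcm⟩ := (hiff a hav2 c hcv2).mp hac
      have e2 : i = m := classEq hdis hai ham
      have e3 : j = m + 1 := classEq hdis hcj hcm
      exact zne hk (p := 0) (q := 1) (by norm_num) (by norm_num) (by norm_num)
        (i := i) (by push_cast; linear_combination e3 - e2 + e1)
    · obtain ⟨m, hcm, ham⟩ := (hiff c hcv2 a hav2).mp hca
      have e2 : j = m := classEq hdis hcj hcm
      have e3 : m + 1 = i := classEq hdis ham hai
      exact zne hk (p := 1) (q := 0) (by norm_num) (by norm_num) (by norm_num)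
        (i := i) (by push_cast; linear_combination e1 + e2 + e3)

lemma tri_V2' (hk : 5 ≤ k) (hcyc : ExtCycleOn E k X V2)
    {a b c : V} (hab : Adj E a b) (hbc : Adj E b c) (hac : Adj E a c)
    (hav2 : a ∈ V2) (hbv2 : b ∈ V2) (hcv2 : c ∈ V2) : False := by
  rcases hab with hab | hba
  · exact tri_V2_dir hk hcyc hab hbc hac hav2 hbv2 hcv2
  · exact tri_V2_dir hk hcyc hba hac hbc hbv2 hav2 hcv2

lemma tri21_dir (hk : 5 ≤ k) (hcyc : ExtCycleOn E k X V2)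
    (hALI : ArcLocallyInSemicomplete E) (hnb : NoBack E V2 V3)
    {a b c : V} (hav2 : a ∈ V2) (hbv2 : b ∈ V2) (hcv3 : c ∈ V3)
    (hab : E a b) (hac : Adj E a c) (hbc : Adj E b c) : False := by
  obtain ⟨hU, hdis, hne, -, hiff⟩ := hcyc
  have hac' : E a c := hac.resolve_right (hnb a hav2 c hcv3)
  have hbc' : E b c := hbc.resolve_right (hnb b hbv2 c hcv3)
  obtain ⟨i, hai, hbi⟩ := (hiff a hav2 b hbv2).mp hab
  obtain ⟨x, hx⟩ := hne (i - 1)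
  have hxv2 : x ∈ V2 := memV2 hU hx
  have hxa : E x a := (hiff x hxv2 a hav2).mpr ⟨i - 1, hx, by rwa [sub_add_cancel]⟩
  rcases hALI a c hac' x b hxa hbc' with h | h
  · have heq : i - 1 = i + 1 := classEq hdis (h ▸ hx) hbi
    exact zne hk (p := 0) (q := 2) (by norm_num) (by norm_num) (by norm_num)
      (i := i - 1) (by push_cast; linear_combination heq)
  rcases h with hxb | hbx
  · obtain ⟨m, hxm, hbm⟩ := (hiff x hxv2 b hbv2).mp hxb
    have e1 : i - 1 = m := classEq hdis hx hxm
    have e2 : m + 1 = i + 1 := classEq hdis hbm hbi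
    exact zne hk (p := 0) (q := 1) (by norm_num) (by norm_num) (by norm_num)
      (i := i) (by push_cast; linear_combination e1 + e2)
  · obtain ⟨m, hbm, hxm⟩ := (hiff b hbv2 x hxv2).mp hbx
    have e1 : i + 1 = m := classEq hdis hbi hbm
    have e2 : m + 1 = i - 1 := classEq hdis hxm hx
    exact zne hk (p := 3) (q := 0) (by norm_num) (by norm_num) (by norm_num)
      (i := i - 1) (by push_cast; linear_combination e1 + e2)

lemma tri21 (hk : 5 ≤ k) (hcyc : ExtCycleOn E k X V2)
    (hALI : ArcLocallyInSemicomplete E) (hnb : NoBack E V2 V3)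
    {a b c : V} (hav2 : a ∈ V2) (hbv2 : b ∈ V2) (hcv3 : c ∈ V3)
    (hab : Adj E a b) (hac : Adj E a c) (hbc : Adj E b c) : False := by
  rcases hab with hab | hba
  · exact tri21_dir hk hcyc hALI hnb hav2 hbv2 hcv3 hab hac hbc
  · exact tri21_dir hk hcyc hALI hnb hbv2 hav2 hcv3 hba hbc hac

lemma tri12_dir (hk : 5 ≤ k) (hcyc : ExtCycleOn E k X V2)
    (hALI : ArcLocallyInSemicomplete E) (hnb : NoBack E V2 V3) (hd : Disjoint V2 V3)
    {a b c : V} (hav2 : a ∈ V2) (hbv3 : b ∈ V3) (hcv3 : c ∈ V3)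
    (hab : Adj E a b) (hac : Adj E a c) (hbc : E b c) : False := by
  have hab' : E a b := hab.resolve_right (hnb a hav2 b hbv3)
  have hac' : E a c := hac.resolve_right (hnb a hav2 c hcv3)
  obtain ⟨hU, hdis, hne, -, hiff⟩ := hcyc
  obtain ⟨i, hai⟩ : ∃ i, a ∈ X i := Set.mem_iUnion.mp (by rw [hU]; exact hav2)
  obtain ⟨x, hx⟩ := hne (i - 1)
  have hxv2 : x ∈ V2 := memV2 hU hx
  have hxa : E x a := (hiff x hxv2 a hav2).mpr ⟨i - 1, hx, by rwa [sub_add_cancel]⟩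
  rcases hALI a c hac' x b hxa hbc with h | h
  · exact Set.disjoint_left.mp hd (h ▸ hxv2) hbv3
  have hxb : E x b := h.resolve_right (hnb x hxv2 b hbv3)
  obtain ⟨y, hy⟩ := hne (i - 1 - 1)
  have hyv2 : y ∈ V2 := memV2 hU hy
  have hyx : E y x := (hiff y hyv2 x hxv2).mpr ⟨i - 1 - 1, hy, by rwa [sub_add_cancel]⟩
  rcases hALI x b hxb y a hyx hab' with h2 | h2
  · have heq : i - 1 - 1 = i := classEq hdis (h2 ▸ hy) hai
    exact zne hk (p := 0) (q := 2) (by norm_num) (by norm_num) (by norm_num)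
      (i := i - 1 - 1) (by push_cast; linear_combination heq)
  rcases h2 with hya | hay
  · obtain ⟨m, hym, ham⟩ := (hiff y hyv2 a hav2).mp hya
    have e1 : i - 1 - 1 = m := classEq hdis hy hym
    have e2 : m + 1 = i := classEq hdis ham hai
    exact zne hk (p := 0) (q := 1) (by norm_num) (by norm_num) (by norm_num)
      (i := i - 1) (by push_cast; linear_combination e1 + e2)
  · obtain ⟨m, ham, hym⟩ := (hiff a hav2 y hyv2).mp hay
    have e1 : i = m := classEq hdis hai ham
    have e2 : m + 1 = i - 1 - 1 := classEq hdis hym hy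
    exact zne hk (p := 3) (q := 0) (by norm_num) (by norm_num) (by norm_num)
      (i := i - 1 - 1) (by push_cast; linear_combination e1 + e2)

lemma tri12 (hk : 5 ≤ k) (hcyc : ExtCycleOn E k X V2)
    (hALI : ArcLocallyInSemicomplete E) (hnb : NoBack E V2 V3) (hd : Disjoint V2 V3)
    {a b c : V} (hav2 : a ∈ V2) (hbv3 : b ∈ V3) (hcv3 : c ∈ V3)
    (hab : Adj E a b) (hac : Adj E a c) (hbc : Adj E b c) : False := by
  rcases hbc with hbc | hcb
  · exact tri12_dir hk hcyc hALI hnb hd hav2 hbv3 hcv3 hab hac hbc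
  · exact tri12_dir hk hcyc hALI hnb hd hav2 hcv3 hbv3 hac hab hcb

lemma tri_V3 (hbip : BipartiteOn E V3) {a b c : V}
    (ha : a ∈ V3) (hb : b ∈ V3) (hc : c ∈ V3)
    (hab : Adj E a b) (hbc : Adj E b c) (hac : Adj E a c) : False := by
  obtain ⟨A, B, hAB, -, hA, hB⟩ := hbip
  have ma : a ∈ A ∪ B := by rw [hAB]; exact ha
  have mb : b ∈ A ∪ B := by rw [hAB]; exact hb
  have mc : c ∈ A ∪ B := by rw [hAB]; exact hc
  rcases ma with ha' | ha' <;> rcases mb with hb' | hb' <;> rcases mc with hc' | hc'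
  all_goals first
    | exact hA _ ha' _ hb' hab | exact hB _ ha' _ hb' hab
    | exact hA _ hb' _ hc' hbc | exact hB _ hb' _ hc' hbc
    | exact hA _ ha' _ hc' hac | exact hB _ ha' _ hc' hac

end Aux


open Paper in
theorem stmt12 {V : Type*} [Fintype V] (E : V → V → Prop)
    (hALI : ArcLocallyInSemicomplete E) (V1 V2 V3 : Set V)
    (k : ℕ) (X : ZMod k → Set V)
    (hstruct : StructPartition E V1 V2 V3 k X) :
    ¬ ∃ a b c, a ∈ V2 ∪ V3 ∧ b ∈ V2 ∪ V3 ∧ c ∈ V2 ∪ V3 ∧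
      a ≠ b ∧ b ≠ c ∧ a ≠ c ∧ Adj E a b ∧ Adj E b c ∧ Adj E a c := by
  rintro ⟨a, b, c, ha, hb, hc, -, -, -, hab, hbc, hac⟩
  obtain ⟨-, -, -, hd23, -, -, hnb23, hk, -, hcyc, hbip⟩ := hstruct
  rcases ha with ha | ha <;> rcases hb with hb | hb <;> rcases hc with hc | hc
  · exact tri_V2' hk hcyc hab hbc hac ha hb hc
  · exact tri21 hk hcyc hALI hnb23 ha hb hc hab hac hbc
  · exact tri21 hk hcyc hALI hnb23 ha hc hb hac hab (adjSymm hbc)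
  · exact tri12 hk hcyc hALI hnb23 hd23 ha hb hc hab hac hbc
  · exact tri21 hk hcyc hALI hnb23 hb hc ha hbc (adjSymm hab) (adjSymm hac)
  · exact tri12 hk hcyc hALI hnb23 hd23 hb ha hc (adjSymm hab) hbc hac
  · exact tri12 hk hcyc hALI hnb23 hd23 hc ha hb (adjSymm hac) (adjSymm hbc) hab
  · exact tri_V3 hbip ha hb hc hab hbc hac
end

section
/- Let D be an arc-locally in-semicomplete digraph with vertex partition (V₁, V₂, V₃) as in the structure theorem (V₁ ↦ V₂, V₁ ⇒ V₃, V₂ ⇒ V₃, D[V₂] an odd extended cycle Q[X₁,...,X_k] of length k ≥ 5, D[V₃] bipartite). For d ≥ 1 let N_d be the set of vertices at distance d from V₂. Then for all d ≥ 2, N_d is a stable set. -/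
open Set

section Aux
open Paper

variable {V : Type*} {E : V → V → Prop}

lemma walkLen_snoc : ∀ (n : ℕ) (x v : V),
    WalkLen E (n+1) x v ↔ ∃ w, WalkLen E n x w ∧ E w v := by
  intro n
  induction n with
  | zero =>
    intro x v
    constructor
    · rintro ⟨w, hxw, rfl⟩; exact ⟨x, rfl, hxw⟩
    · rintro ⟨w, rfl, hwv⟩; exact ⟨v, hwv, rfl⟩
  | succ n ih =>
    intro x v
    constructor
    · rintro ⟨w, hxw, hw⟩
      obtain ⟨z, hz, hzv⟩ := (ih w v).1 hw
      exact ⟨z, ⟨w, hxw, hz⟩, hzv⟩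
    · rintro ⟨w, ⟨z, hxz, hzw⟩, hwv⟩
      exact ⟨z, hxz, (ih z v).2 ⟨w, hzw, hwv⟩⟩

lemma pred_mem {V2 : Set V} {d : ℕ} {v : V} (hv : v ∈ Nd E V2 (d+1)) :
    ∃ b, E b v ∧ b ∈ Nd E V2 d := by
  obtain ⟨⟨x, hx, hwalk⟩, hmin⟩ := hv
  obtain ⟨b, hb, hbv⟩ := (walkLen_snoc d x v).1 hwalk
  refine ⟨b, hbv, ⟨x, hx, hb⟩, ?_⟩
  rintro d' hd' ⟨y, hy, hw⟩
  exact hmin (d'+1) (by omega) ⟨y, hy, (walkLen_snoc d' y v).2 ⟨b, hw, hbv⟩⟩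

lemma walk_stay {V1 V2 V3 : Set V} (hcover : V1 ∪ V2 ∪ V3 = Set.univ)
    (hdom : Domin E V1 V2) (hnb13 : NoBack E V1 V3) :
    ∀ (n : ℕ) (x v : V), x ∈ V2 ∪ V3 → WalkLen E n x v → v ∈ V2 ∪ V3 := by
  intro n
  induction n with
  | zero => rintro x v hx rfl; exact hx
  | succ n ih =>
    rintro x v hx ⟨w, hxw, hwalk⟩
    refine ih w v ?_ hwalk
    have hw : w ∈ V1 ∪ V2 ∪ V3 := by rw [hcover]; trivial
    rcases hw with (hw1 | hw2) | hw3
    · exfalso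
      rcases hx with hx2 | hx3
      · exact hdom.2 w hw1 x hx2 hxw
      · exact hnb13 w hw1 x hx3 hxw
    · exact Or.inl hw2
    · exact Or.inr hw3

lemma Nd_sub_V3 {V1 V2 V3 : Set V} (hcover : V1 ∪ V2 ∪ V3 = Set.univ)
    (hdom : Domin E V1 V2) (hnb13 : NoBack E V1 V3)
    {d : ℕ} (hd : 1 ≤ d) {v : V} (hv : v ∈ Nd E V2 d) : v ∈ V3 := by
  obtain ⟨⟨x, hx, hwalk⟩, hmin⟩ := hv
  have hv23 : v ∈ V2 ∪ V3 := walk_stay hcover hdom hnb13 d x v (Or.inl hx) hwalk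
  rcases hv23 with hv2 | hv3
  · exact absurd ⟨v, hv2, rfl⟩ (hmin 0 (by omega))
  · exact hv3

end Aux

open Paper in
theorem stmt13 {V : Type*} [Fintype V] (E : V → V → Prop)
    (hALI : ArcLocallyInSemicomplete E) (V1 V2 V3 : Set V)
    (k : ℕ) (X : ZMod k → Set V)
    (hstruct : StructPartition E V1 V2 V3 k X) :
    ∀ d : ℕ, 2 ≤ d → Stable E (Nd E V2 d) := by
  obtain ⟨hcover, h12, h13, h23, hdom, hnb13, hnb23, hk5, hkodd, hcyc, hbip⟩ := hstruct
  obtain ⟨A, B, hAB, hABd, hA, hB⟩ := hbip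
  intro d
  induction d using Nat.strong_induction_on with
  | _ d ih =>
  intro hd
  have key : ∀ u v, u ∈ Nd E V2 d → v ∈ Nd E V2 d → ¬ E u v := by
    intro u v hu hv heuv
    obtain ⟨e, rfl⟩ : ∃ e, d = e + 1 := ⟨d - 1, by omega⟩
    have he1 : 1 ≤ e := by omega
    have huV3 : u ∈ V3 := Nd_sub_V3 hcover hdom hnb13 (by omega) hu
    have hvV3 : v ∈ V3 := Nd_sub_V3 hcover hdom hnb13 (by omega) hv
    obtain ⟨b, hbv, hbN⟩ := pred_mem hv
    rcases Nat.lt_or_ge e 2 with he2 | he2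
    · -- d = 2
      have he : e = 1 := by omega
      subst he
      obtain ⟨⟨q, hq2, hqw⟩, _⟩ := hbN
      have hqb : E q b := by obtain ⟨w, hqb, hw⟩ := hqw; rwa [hw] at hqb
      rcases hALI b v hbv q u hqb heuv with heq | hadj
      · exact hu.2 0 (by omega) ⟨u, heq ▸ hq2, rfl⟩
      · rcases hadj with hqu | huq
        · exact hu.2 1 (by omega) ⟨q, hq2, u, hqu, rfl⟩
        · exact hnb23 q hq2 u huV3 huq
    · -- d ≥ 3
      obtain ⟨a, hau, haN⟩ := pred_mem hu
      have haV3 : a ∈ V3 := Nd_sub_V3 hcover hdom hnb13 (by omega) haN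
      rcases hALI u v heuv a b hau hbv with rfl | hadj
      · -- a = b
        have hmem : ∀ x, E a x → x ∈ V3 → x ∈ B ∨ x ∈ A := by
          intro x hax hx
          have hx' : x ∈ A ∪ B := by rw [hAB]; exact hx
          have ha' : a ∈ A ∪ B := by rw [hAB]; exact haV3
          rcases ha' with haA | haB
          · left
            rcases hx' with hxA | hxB
            · exact absurd (Or.inl hax) (hA a haA x hxA)
            · exact hxB
          · right
            rcases hx' with hxA | hxB
            · exact hxA
            · exact absurd (Or.inl hax) (hB a haB x hxB)
        rcases hmem u hau huV3 with huB | huA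
        · rcases hmem v hbv hvV3 with hvB | hvA
          · exact hB u huB v hvB (Or.inl heuv)
          · -- u ∈ B, v ∈ A: then a not in A (since E a v) and not in B (since E a u)
            have ha' : a ∈ A ∪ B := by rw [hAB]; exact haV3
            rcases ha' with haA | haB
            · exact hA a haA v hvA (Or.inl hbv)
            · exact hB a haB u huB (Or.inl hau)
        · rcases hmem v hbv hvV3 with hvB | hvA
          · have ha' : a ∈ A ∪ B := by rw [hAB]; exact haV3
            rcases ha' with haA | haB
            · exact hA a haA u huA (Or.inl hau)
            · exact hB a haB v hvB (Or.inl hbv)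
          · exact hA u huA v hvA (Or.inl heuv)
      · -- Adj a b with a ≠ b: contradicts IH stability of N_{e}
        by_cases hab : a = b
        · subst hab; rcases hadj with h | h
          all_goals {
            have ha' : a ∈ A ∪ B := by rw [hAB]; exact haV3
            rcases ha' with haA | haB
            · exact hA a haA a haA (Or.inl h)
            · exact hB a haB a haB (Or.inl h) }
        · exact ih e (by omega) (by omega) a haN b hbN hab hadj
  intro u hu v hv hne hadj
  rcases hadj with h | h
  · exact key u v hu hv h
  · exact key v u hv hu h
end

section
/- Let D be an arc-locally in-semicomplete digraph with vertex partition (V₁, V₂, V₃) as in the structure theorem, where D[V₂] is an odd extended cycle Q[X₁,...,X_k] of length k ≥ 5. Then there are no vertices x_i ∈ X_i, x_j ∈ X_j with i ≠ j and a vertex y ∈ V₃ such that both x_i and x_j dominate y. -/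
open Set

open Paper in
/-- Key step: if `xi ∈ X i` and `xj ∈ X j` (`i ≠ j`) both dominate `y ∈ V3`, then
the arc-locally in-semicomplete property forces `j = i - 1` or `j = i - 2`. -/
lemma stmt14_aux {V : Type*} (E : V → V → Prop)
    (hALI : ArcLocallyInSemicomplete E) (V2 : Set V)
    (k : ℕ) (X : ZMod k → Set V)
    (hext : ExtCycleOn E k X V2)
    {i j : ZMod k} {xi xj y : V} (hij : i ≠ j)
    (hxi : xi ∈ X i) (hxj : xj ∈ X j)
    (hxiy : E xi y) (hxjy : E xj y) :
    j = i - 1 ∨ j = i - 2 := by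
  obtain ⟨hUnion, hdisj, hne, hstab, hedge⟩ := hext
  have hmem : ∀ {m : ZMod k} {v : V}, v ∈ X m → v ∈ V2 := by
    intro m v hv
    rw [← hUnion]; exact Set.mem_iUnion.mpr ⟨m, hv⟩
  have huniq : ∀ {m n : ZMod k} {v : V}, v ∈ X m → v ∈ X n → m = n := by
    intro m n v hm hn
    by_contra h
    exact Set.disjoint_left.mp (hdisj m n h) hm hn
  obtain ⟨a, ha⟩ := hne (i - 1)
  have haxi : E a xi := by
    refine (hedge a (hmem ha) xi (hmem hxi)).mpr ⟨i - 1, ha, ?_⟩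
    simpa using hxi
  rcases hALI xi y hxiy a xj haxi hxjy with h | h | h
  · left; exact huniq hxj (h ▸ ha)
  · -- E a xj: then xj ∈ X ((i-1)+1) = X i, contradiction with i ≠ j
    exfalso
    obtain ⟨m, ham, hxjm⟩ := (hedge a (hmem ha) xj (hmem hxj)).mp h
    have hm : m = i - 1 := huniq ham ha
    subst hm
    have : xj ∈ X i := by simpa using hxjm
    exact hij (huniq this hxj)
  · -- E xj a: then a ∈ X (j+1) so j + 1 = i - 1
    right
    obtain ⟨m, hxjm, ham⟩ := (hedge xj (hmem hxj) a (hmem ha)).mp h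
    have hm : m = j := huniq hxjm hxj
    rw [hm] at ham
    have : j + 1 = i - 1 := huniq ham ha
    linear_combination this

open Paper in
theorem stmt14 {V : Type*} [Fintype V] (E : V → V → Prop)
    (hALI : ArcLocallyInSemicomplete E) (V1 V2 V3 : Set V)
    (k : ℕ) (X : ZMod k → Set V)
    (hstruct : StructPartition E V1 V2 V3 k X) :
    ¬ ∃ (i j : ZMod k) (xi xj y : V), i ≠ j ∧ xi ∈ X i ∧ xj ∈ X j ∧
      y ∈ V3 ∧ E xi y ∧ E xj y := by
  rintro ⟨i, j, xi, xj, y, hij, hxi, hxj, hy, hxiy, hxjy⟩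
  obtain ⟨-, -, -, -, -, -, -, hk5, -, hext, -⟩ := hstruct
  have h1 := stmt14_aux E hALI V2 k X hext hij hxi hxj hxiy hxjy
  have h2 := stmt14_aux E hALI V2 k X hext (Ne.symm hij) hxj hxi hxjy hxiy
  have : NeZero k := ⟨by omega⟩
  have hdvd : ∀ c : ℕ, (c : ZMod k) = 0 → k ∣ c := fun c hc =>
    (ZMod.natCast_eq_zero_iff c k).mp hc
  rcases h1 with h1 | h1 <;> rcases h2 with h2 | h2 <;>
    [ (have : ((2 : ℕ) : ZMod k) = 0 := by push_cast; linear_combination h1 + h2);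
      (have : ((3 : ℕ) : ZMod k) = 0 := by push_cast; linear_combination h1 + h2);
      (have : ((3 : ℕ) : ZMod k) = 0 := by push_cast; linear_combination h1 + h2);
      (have : ((4 : ℕ) : ZMod k) = 0 := by push_cast; linear_combination h1 + h2)] <;>
    · have h5 := Nat.le_of_dvd (by norm_num) (hdvd _ this)
      omega
end

section
/- Let D be an arc-locally in-semicomplete digraph with vertex partition (V₁, V₂, V₃) as in the structure theorem, where D[V₂] is an odd extended cycle Q[X₁,...,X_k] of length k ≥ 5. Then N⁺(X_i) is a stable set for every i ∈ {1,...,k}, and there is no edge from N⁺(X_{i+1}) to N⁺(X_i) (indices mod k), where N⁺(X_i) denotes the out-neighborhood of X_i outside X_i intersected with V₃. -/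
open Set

open Paper in
theorem stmt15 {V : Type*} [Fintype V] (E : V → V → Prop)
    (hALI : ArcLocallyInSemicomplete E) (V1 V2 V3 : Set V)
    (k : ℕ) (X : ZMod k → Set V)
    (hstruct : StructPartition E V1 V2 V3 k X) :
    ∀ i : ZMod k, Stable E (NplusSet E (X i) ∩ V3) ∧
      ∀ u ∈ NplusSet E (X (i + 1)) ∩ V3, ∀ v ∈ NplusSet E (X i) ∩ V3, ¬ E u v := by

  obtain ⟨hUniv, h12, h13, h23, hDom, hNB13, hNB23, hk, hodd, hcyc, hbip⟩ := hstruct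
  obtain ⟨hV2, hdisj, hne, hstab, hiff⟩ := hcyc
  have hz : ∀ m : ℕ, 0 < m → m < k → (m : ZMod k) ≠ 0 := by
    intro m hm1 hm2 h
    rw [ZMod.natCast_eq_zero_iff] at h
    have := Nat.le_of_dvd hm1 h
    omega
  have hmem : ∀ {i : ZMod k} {v : V}, v ∈ X i → v ∈ V2 := by
    intro i v hv
    rw [← hV2]
    exact Set.mem_iUnion.mpr ⟨i, hv⟩
  have huniq : ∀ (v : V) (a b : ZMod k), v ∈ X a → v ∈ X b → a = b := by
    intro v a b ha hb
    by_contra h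
    exact Set.disjoint_left.mp (hdisj a b h) ha hb
  have hedge : ∀ (a b : ZMod k) (x y : V), x ∈ X a → y ∈ X b → (E x y ↔ b = a + 1) := by
    intro a b x y hx hy
    rw [hiff x (hmem hx) y (hmem hy)]
    constructor
    · rintro ⟨j, hxj, hyj⟩
      have h1 := huniq x a j hx hxj
      have h2 := huniq y b (j + 1) hy hyj
      rw [h1, h2]
    · rintro rfl
      exact ⟨a, hx, hy⟩
  have hnotV3 : ∀ {i : ZMod k} {x : V}, x ∈ X i → x ∉ V3 := by
    intro i x hx hx3
    exact Set.disjoint_left.mp h23 (hmem hx) hx3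
  -- DOM: if u ∈ V3 is dominated by s ∈ X a and t ∈ X b, then a = b+1 ∨ a = b ∨ a = b+2
  have hDOM : ∀ (a b : ZMod k) (s t u : V), s ∈ X a → t ∈ X b → u ∈ V3 →
      E s u → E t u → a = b + 1 ∨ a = b ∨ a = b + 2 := by
    intro a b s t u hs ht hu hsu htu
    obtain ⟨r, hr⟩ := hne (a - 1)
    have hrs : E r s := (hedge (a - 1) a r s hr hs).mpr (by ring)
    rcases hALI s u hsu r t hrs htu with h | h | h
    · left
      have := huniq t (a - 1) b (h ▸ hr) ht
      linear_combination this
    · right; left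
      have := (hedge (a - 1) b r t hr ht).mp h
      linear_combination -this
    · right; right
      have := (hedge b (a - 1) t r ht hr).mp h
      linear_combination this
  -- STEP: if u, v ∈ V3, E u v, and x ∈ X a dominates v, then some x' ∈ X (a-1) dominates u
  have hSTEP : ∀ (a : ZMod k) (x u v : V), x ∈ X a → u ∈ V3 → E u v → E x v →
      ∃ x' ∈ X (a - 1), E x' u := by
    intro a x u v hx hu huv hxv
    obtain ⟨x', hx'⟩ := hne (a - 1)
    have hx'x : E x' x := (hedge (a - 1) a x' x hx' hx).mpr (by ring)
    refine ⟨x', hx', ?_⟩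
    rcases hALI x v hxv x' u hx'x huv with h | h | h
    · exact absurd (h ▸ hu) (hnotV3 hx')
    · exact h
    · exact absurd h (hNB23 x' (hmem hx') u hu)
  -- KEY: u, v ∈ V3 both dominated (by x ∈ X a, y ∈ X b with b = a ∨ b = a+1) → ¬ E u v
  have key : ∀ (a b : ZMod k) (x y u v : V), x ∈ X a → y ∈ X b → u ∈ V3 → v ∈ V3 →
      E y u → E x v → (b = a ∨ b = a + 1) → ¬ E u v := by
    intro a b x y u v hx hy hu hv hyu hxv hab huv
    obtain ⟨x', hx', hx'u⟩ := hSTEP a x u v hx hu huv hxv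
    rcases hab with rfl | rfl
    · -- b = a : first show we may assume x = y is irrelevant; directly use DOM
      rcases hALI u v huv y x hyu hxv with h | h | h
      · -- y = x : then x dominates both u and v; use x' ∈ X (a-1) and x ∈ X a on u
        rcases hDOM _ _ x' x u hx' hx hu hx'u (h ▸ hyu) with h' | h' | h'
        · exact hz 2 (by norm_num) (by omega) (by linear_combination -h')
        · exact hz 1 (by norm_num) (by omega) (by linear_combination -h')
        · exact hz 3 (by norm_num) (by omega) (by linear_combination -h')
      · have := (hedge _ _ y x hy hx).mp h
        exact hz 1 (by norm_num) (by omega) (by linear_combination -this)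
      · have := (hedge _ _ x y hx hy).mp h
        exact hz 1 (by norm_num) (by omega) (by linear_combination -this)
    · -- b = a + 1 : y ∈ X (a+1) and x' ∈ X (a-1) both dominate u
      rcases hDOM _ _ x' y u hx' hy hu hx'u hyu with h' | h' | h'
      · exact hz 3 (by norm_num) (by omega) (by linear_combination -h')
      · exact hz 2 (by norm_num) (by omega) (by linear_combination -h')
      · exact hz 4 (by norm_num) (by omega) (by linear_combination -h')
  intro i
  constructor
  · intro u hu v hv hne' hadj
    obtain ⟨⟨hu1, x, hxX, hxu⟩, hu3⟩ := hu
    obtain ⟨⟨hv1, y, hyX, hyv⟩, hv3⟩ := hv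
    rcases hadj with h | h
    · exact key i i y x u v hyX hxX hu3 hv3 hxu hyv (Or.inl rfl) h
    · exact key i i x y v u hxX hyX hv3 hu3 hyv hxu (Or.inl rfl) h
  · intro u hu v hv huv
    obtain ⟨⟨hu1, y, hyX, hyu⟩, hu3⟩ := hu
    obtain ⟨⟨hv1, x, hxX, hxv⟩, hv3⟩ := hv
    exact key i (i + 1) x y u v hxX hyX hu3 hv3 hyu hxv (Or.inr rfl) huv
end

section
/- Every extended cycle D = Q[X₁,...,X_k] that contains no induced blocking odd cycle satisfies the BE-property: for every maximum stable set S of D there is a path partition of V(D) into directed paths, each containing exactly one vertex of S, with every vertex of S starting or ending its path. -/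
open Set

namespace P17

lemma zmod_nat_inj {k : ℕ} {α β : ℕ} (h : (α : ZMod k) = β) : α % k = β % k :=
  (ZMod.natCast_eq_natCast_iff α β k).1 h

lemma mod_eq_bounded {k a b : ℕ} (hk : 0 < k) (ha : a ≤ k) (hb : b ≤ k) (h : a % k = b % k) :
    a = b ∨ (a = 0 ∧ b = k) ∨ (a = k ∧ b = 0) := by
  rcases Nat.lt_or_ge a k with h1 | h1 <;> rcases Nat.lt_or_ge b k with h2 | h2
  · rw [Nat.mod_eq_of_lt h1, Nat.mod_eq_of_lt h2] at h; omega
  · have hb' : b = k := by omega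
    subst hb'
    rw [Nat.mod_eq_of_lt h1, Nat.mod_self] at h; omega
  · have ha' : a = k := by omega
    subst ha'
    rw [Nat.mod_eq_of_lt h2, Nat.mod_self] at h; omega
  · omega

lemma shift_cases {k : ℕ} {α β : ℕ} (c : ZMod k) (h : c + (α : ZMod k) = c + β)
    (hk : 0 < k) (hα : α ≤ k) (hβ : β ≤ k) :
    α = β ∨ (α = 0 ∧ β = k) ∨ (α = k ∧ β = 0) :=
  mod_eq_bounded hk hα hβ (zmod_nat_inj (add_left_cancel h))

lemma shift_inj {k : ℕ} {α β : ℕ} (c : ZMod k) (h : c + (α : ZMod k) = c + β)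
    (hα : α < k) (hβ : β < k) : α = β := by
  have h2 := zmod_nat_inj (add_left_cancel h)
  rwa [Nat.mod_eq_of_lt hα, Nat.mod_eq_of_lt hβ] at h2

lemma shift_inj' {k : ℕ} {α β : ℕ} (c : ZMod k) (h : c + (α : ZMod k) = c + β)
    (hα : α ≤ k) (hβ : β < k) : α = β ∨ (α = k ∧ β = 0) := by
  have h2 := zmod_nat_inj (add_left_cancel h)
  rcases Nat.lt_or_ge α k with h3 | h3
  · left; rwa [Nat.mod_eq_of_lt h3, Nat.mod_eq_of_lt hβ] at h2
  · right
    have hα' : α = k := le_antisymm hα h3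
    subst hα'
    rw [Nat.mod_self, Nat.mod_eq_of_lt hβ] at h2
    exact ⟨rfl, h2.symm⟩

section Numeric

variable {k : ℕ} {J : Finset (ZMod k)} {m : ZMod k → ℕ}

def ok (k : ℕ) (J : Finset (ZMod k)) (s : ℕ) (c : ZMod k) : Prop :=
  (∀ j < s, c + ((2*j+1 : ℕ) : ZMod k) ∈ J) ∧ c + ((2*s : ℕ) : ZMod k) ∉ J

instance (k : ℕ) (J : Finset (ZMod k)) (s : ℕ) (c : ZMod k) : Decidable (ok k J s c) := by
  unfold ok; infer_instance

noncomputable def Aterm (k : ℕ) (J : Finset (ZMod k)) (m : ZMod k → ℕ) (s : ℕ) (c : ZMod k) : ℕ :=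
  if c + ((2*s+1 : ℕ) : ZMod k) ∈ J then 0 else m (c + ((2*s : ℕ) : ZMod k))

noncomputable def Win (k : ℕ) (J : Finset (ZMod k)) (m : ZMod k → ℕ) (s : ℕ) (c : ZMod k) : ℤ :=
  (∑ j ∈ Finset.range s,
    ((m (c + ((2*j : ℕ) : ZMod k)) : ℤ) - (m (c + ((2*j+1 : ℕ) : ZMod k)) : ℤ))) +
    (Aterm k J m s c : ℤ)

noncomputable def xv (k : ℕ) (J : Finset (ZMod k)) (m : ZMod k → ℕ) (c : ZMod k) : ℕ :=
  ((Finset.Icc 1 ((k-1)/2)).filter (fun s => ok k J s c)).sup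
    (fun s => (Win k J m s c).toNat)

lemma exchange (hJind : ∀ i ∈ J, i + 1 ∉ J)
    (hmax : ∀ T : Finset (ZMod k), (∀ i ∈ T, i + 1 ∉ T) → ∑ i ∈ T, m i ≤ ∑ i ∈ J, m i)
    (Add R : Finset (ZMod k)) (hR : R ⊆ J) (hAdd : ∀ u ∈ Add, u ∉ J)
    (h1 : ∀ u ∈ Add, u + 1 ∉ Add ∧ (u + 1 ∈ J → u + 1 ∈ R))
    (h2 : ∀ u ∈ J, u ∉ R → u + 1 ∉ Add) :
    ∑ u ∈ Add, m u ≤ ∑ u ∈ R, m u := by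
  have hT : ∀ i ∈ Add ∪ (J \ R), i + 1 ∉ Add ∪ (J \ R) := by
    intro u hu
    rcases Finset.mem_union.1 hu with hu | hu
    · rcases h1 u hu with ⟨ha, hb⟩
      intro hc
      rcases Finset.mem_union.1 hc with hc | hc
      · exact ha hc
      · rcases Finset.mem_sdiff.1 hc with ⟨hcJ, hcR⟩
        exact hcR (hb hcJ)
    · rcases Finset.mem_sdiff.1 hu with ⟨huJ, huR⟩
      intro hc
      rcases Finset.mem_union.1 hc with hc | hc
      · exact h2 u huJ huR hc
      · exact hJind u huJ (Finset.mem_sdiff.1 hc).1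
  have hd : Disjoint Add (J \ R) := by
    rw [Finset.disjoint_left]
    intro u hu hu2
    exact hAdd u hu (Finset.mem_sdiff.1 hu2).1
  have := hmax (Add ∪ (J \ R)) hT
  rw [Finset.sum_union hd] at this
  have hsplit : ∑ u ∈ J \ R, m u + ∑ u ∈ R, m u = ∑ u ∈ J, m u := Finset.sum_sdiff hR
  omega

/-- interior window classes are not in J -/
lemma hj_not_mem (hJind : ∀ i ∈ J, i + 1 ∉ J) {c : ZMod k} {s : ℕ} (hok : ok k J s c)
    {j : ℕ} (hj1 : 1 ≤ j) (hjs : j ≤ s) :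
    c + ((2*j : ℕ) : ZMod k) ∉ J := by
  rcases Nat.lt_or_ge j s with hlt | hge
  · obtain ⟨j', rfl⟩ : ∃ j', j = j' + 1 := ⟨j - 1, by omega⟩
    have h1 : c + ((2*j'+1 : ℕ) : ZMod k) ∈ J := hok.1 j' (by omega)
    have : c + ((2*(j'+1) : ℕ) : ZMod k) = c + ((2*j'+1 : ℕ) : ZMod k) + 1 := by
      push_cast; ring
    rw [this]
    exact hJind _ h1
  · have : j = s := by omega
    subst this
    exact hok.2

/-- Win as difference of ℕ sums -/
lemma win_eq (s : ℕ) (c : ZMod k) :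
    Win k J m s c = ((∑ j ∈ Finset.range s, m (c + ((2*j : ℕ) : ZMod k)) : ℕ) : ℤ)
      - ((∑ j ∈ Finset.range s, m (c + ((2*j+1 : ℕ) : ZMod k)) : ℕ) : ℤ)
      + (Aterm k J m s c : ℤ) := by
  unfold Win
  rw [Finset.sum_sub_distrib]
  push_cast
  ring

/-- N1 : per-window bound `Win ≤ m c` -/
lemma win_le_m (hJind : ∀ i ∈ J, i + 1 ∉ J)
    (hmax : ∀ T : Finset (ZMod k), (∀ i ∈ T, i + 1 ∉ T) → ∑ i ∈ T, m i ≤ ∑ i ∈ J, m i)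
    {c : ZMod k} (hc : c ∉ J) {s : ℕ} (hs1 : 1 ≤ s) (h2s : 2*s ≤ k - 1) (hkk : 2 ≤ k)
    (hok : ok k J s c) : Win k J m s c ≤ (m c : ℤ) := by
  classical
  set hf : ℕ → ZMod k := fun j => c + ((2*j : ℕ) : ZMod k) with hhf
  set sf : ℕ → ZMod k := fun j => c + ((2*j+1 : ℕ) : ZMod k) with hsf
  have hinj : ∀ {a b : ℕ}, a ≤ s → b ≤ s → hf a = hf b → a = b := by
    intro a b ha hb h
    have := shift_inj c h (by omega) (by omega)
    omega
  have hfs : ∀ {a b : ℕ}, 1 ≤ a → a ≤ s → b ≤ s → hf a ≠ sf b := by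
    intro a b ha1 ha hb h
    rcases shift_cases c h (by omega) (by omega) (by omega) with h | ⟨h1, h2⟩ | ⟨h1, h2⟩ <;> omega
  have hsfs : ∀ {a b : ℕ}, a ≤ s → b ≤ s → sf a = sf b → a = b := by
    intro a b ha hb h
    rcases shift_cases c h (by omega) (by omega) (by omega) with h | ⟨h1, h2⟩ | ⟨h1, h2⟩ <;> omega
  set Add : Finset (ZMod k) :=
    ((Finset.Ico 1 s).image hf) ∪ (if sf s ∈ J then (∅ : Finset (ZMod k)) else {hf s}) with hAddd
  set R : Finset (ZMod k) := (Finset.range s).image sf with hRd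
  have hmemAdd : ∀ u, u ∈ Add ↔ ((∃ j, 1 ≤ j ∧ j < s ∧ u = hf j) ∨ (sf s ∉ J ∧ u = hf s)) := by
    intro u
    simp only [hAddd, Finset.mem_union, Finset.mem_image, Finset.mem_Ico]
    constructor
    · rintro (⟨j, ⟨h1, h2⟩, rfl⟩ | h)
      · exact Or.inl ⟨j, h1, h2, rfl⟩
      · split at h
        · simp at h
        · simp at h; right; exact ⟨by assumption, h⟩
    · rintro (⟨j, h1, h2, rfl⟩ | ⟨h1, rfl⟩)
      · exact Or.inl ⟨j, ⟨h1, h2⟩, rfl⟩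
      · right; rw [if_neg h1]; simp
  have hmemR : ∀ u, u ∈ R ↔ ∃ j, j < s ∧ u = sf j := by
    intro u; simp only [hRd, Finset.mem_image, Finset.mem_range]
    constructor
    · rintro ⟨j, h1, rfl⟩; exact ⟨j, h1, rfl⟩
    · rintro ⟨j, h1, rfl⟩; exact ⟨j, h1, rfl⟩
  have hRJ : R ⊆ J := by
    intro u hu; rcases (hmemR u).1 hu with ⟨j, hj, rfl⟩; exact hok.1 j hj
  have hAddJ : ∀ u ∈ Add, u ∉ J := by
    intro u hu
    rcases (hmemAdd u).1 hu with ⟨j, hj1, hjs, rfl⟩ | ⟨h1, rfl⟩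
    · exact hj_not_mem hJind hok hj1 (by omega)
    · exact hok.2
  have hplus : ∀ j : ℕ, hf j + 1 = sf j := by
    intro j; simp only [hhf, hsf]; push_cast; ring
  have hplus' : ∀ j : ℕ, sf j + 1 = hf (j+1) := by
    intro j; simp only [hhf, hsf]; push_cast; ring
  have key : ∑ u ∈ Add, m u ≤ ∑ u ∈ R, m u := by
    apply exchange hJind hmax Add R hRJ hAddJ
    · intro u hu
      rcases (hmemAdd u).1 hu with ⟨j, hj1, hjs, rfl⟩ | ⟨hns, rfl⟩
      · refine ⟨?_, ?_⟩
        · rw [hplus j]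
          intro hc2
          rcases (hmemAdd _).1 hc2 with ⟨l, hl1, hls, he⟩ | ⟨_, he⟩
          · exact hfs (by omega) (by omega) (by omega) he.symm
          · exact hfs hs1 (le_refl s) (by omega) he.symm
        · rw [hplus j]
          intro _
          exact (hmemR _).2 ⟨j, hjs, rfl⟩
      · refine ⟨?_, ?_⟩
        · rw [hplus s]
          intro hc2
          rcases (hmemAdd _).1 hc2 with ⟨l, hl1, hls, he⟩ | ⟨_, he⟩
          · exact hfs (by omega) (by omega) (le_refl s) he.symm
          · exact hfs hs1 (le_refl s) (le_refl s) he.symm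
        · rw [hplus s]
          intro hJ2; exact absurd hJ2 hns
    · intro u huJ huR hc2
      rcases (hmemAdd _).1 hc2 with ⟨l, hl1, hls, he⟩ | ⟨hns, he⟩
      · apply huR
        obtain ⟨l', rfl⟩ : ∃ l', l = l' + 1 := ⟨l - 1, by omega⟩
        rw [← hplus' l'] at he
        have : u = sf l' := add_right_cancel (he : u + 1 = sf l' + 1)
        rw [this]; exact (hmemR _).2 ⟨l', by omega, rfl⟩
      · apply huR
        obtain ⟨l', rfl⟩ : ∃ l', s = l' + 1 := ⟨s - 1, by omega⟩
        rw [← hplus' l'] at he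
        have : u = sf l' := add_right_cancel (he : u + 1 = sf l' + 1)
        rw [this]; exact (hmemR _).2 ⟨l', by omega, rfl⟩
  have hdisj : Disjoint ((Finset.Ico 1 s).image hf)
      (if sf s ∈ J then (∅ : Finset (ZMod k)) else {hf s}) := by
    split
    · simp
    · rw [Finset.disjoint_left]
      intro u hu hu2
      simp only [Finset.mem_image, Finset.mem_Ico] at hu
      rcases hu with ⟨j, ⟨hj1, hjs⟩, rfl⟩
      simp only [Finset.mem_singleton] at hu2
      have := hinj (by omega) (le_refl s) hu2
      omega
  have hsum1 : ∑ u ∈ Add, m u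
      = (∑ j ∈ Finset.Ico 1 s, m (hf j)) + Aterm k J m s c := by
    rw [hAddd, Finset.sum_union hdisj, Finset.sum_image ?_]
    · unfold Aterm
      by_cases hsp : sf s ∈ J
      · rw [if_pos hsp, if_pos (by simpa [hsf] using hsp)]
        simp
      · rw [if_neg hsp, if_neg (by simpa [hsf] using hsp)]
        simp [hhf]
    · intro a ha b hb h
      simp only [Finset.mem_coe, Finset.mem_Ico] at ha hb
      exact hinj (by omega) (by omega) h
  have hsum2 : ∑ u ∈ R, m u = ∑ j ∈ Finset.range s, m (sf j) := by
    rw [hRd, Finset.sum_image ?_]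
    intro a ha b hb h
    simp only [Finset.mem_coe, Finset.mem_range] at ha hb
    exact hsfs (by omega) (by omega) h
  have hsum3 : ∑ j ∈ Finset.range s, m (hf j) = m c + ∑ j ∈ Finset.Ico 1 s, m (hf j) := by
    rw [Finset.range_eq_Ico, Finset.sum_eq_sum_Ico_succ_bot (by omega)]
    congr 1
    simp [hhf]
  rw [hsum1, hsum2] at key
  rw [win_eq]
  simp only [hhf, hsf] at key hsum3
  omega


/-- xv is at least each valid window value -/
lemma xv_ge {t : ℕ} {c : ZMod k} (ht1 : 1 ≤ t) (ht2 : t ≤ (k-1)/2) (hok : ok k J t c) :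
    Win k J m t c ≤ (xv k J m c : ℤ) := by
  have h1 : t ∈ (Finset.Icc 1 ((k-1)/2)).filter (fun s => ok k J s c) := by
    simp only [Finset.mem_filter, Finset.mem_Icc]
    exact ⟨⟨ht1, ht2⟩, hok⟩
  have h2 := Finset.le_sup (f := fun s => (Win k J m s c).toNat) h1
  calc Win k J m t c ≤ ((Win k J m t c).toNat : ℤ) := Int.self_le_toNat _
    _ ≤ (xv k J m c : ℤ) := by exact_mod_cast h2

/-- 2|J| ≤ k -/
lemma cardJ (hJind : ∀ i ∈ J, i + 1 ∉ J) (hkk : 2 ≤ k) : 2 * J.card ≤ k := by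
  haveI : NeZero k := ⟨by omega⟩
  have hinj : Function.Injective (fun u : ZMod k => u + 1) := fun a b h => by
    exact add_right_cancel h
  have hdisj : Disjoint J (J.image (fun u => u + 1)) := by
    rw [Finset.disjoint_right]
    intro x hx hx2
    simp only [Finset.mem_image] at hx
    rcases hx with ⟨u, hu, rfl⟩
    exact hJind u hu hx2
  have h1 := Finset.card_union_of_disjoint hdisj
  have h2 : (J ∪ J.image (fun u => u + 1)).card ≤ Fintype.card (ZMod k) :=
    Finset.card_le_card (Finset.subset_univ _) |>.trans (by rw [Finset.card_univ])
  rw [ZMod.card] at h2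
  rw [Finset.card_image_of_injective _ hinj] at h1
  omega

/-- N0 : full even wrap is nonpositive -/
lemma wrap_nonpos (hJind : ∀ i ∈ J, i + 1 ∉ J)
    (hmax : ∀ T : Finset (ZMod k), (∀ i ∈ T, i + 1 ∉ T) → ∑ i ∈ T, m i ≤ ∑ i ∈ J, m i)
    (hkk : 2 ≤ k) {c : ZMod k} (hke : k % 2 = 0)
    (hval : ∀ j < k/2, c + ((2*j+1 : ℕ) : ZMod k) ∈ J) :
    Win k J m (k/2) c ≤ 0 := by
  classical
  set r := k / 2 with hr
  set hf : ℕ → ZMod k := fun j => c + ((2*j : ℕ) : ZMod k) with hhf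
  set sf : ℕ → ZMod k := fun j => c + ((2*j+1 : ℕ) : ZMod k) with hsf
  have hA : Aterm k J m r c = 0 := by
    unfold Aterm
    rw [if_pos]
    have he : c + ((2*r+1 : ℕ) : ZMod k) = c + ((2*0+1 : ℕ) : ZMod k) := by
      have : 2*r = k := by omega
      rw [this]
      push_cast
      rw [ZMod.natCast_self]
      ring
    rw [he]
    exact hval 0 (by omega)
  have hsinj : ∀ {a b : ℕ}, a < r → b < r → sf a = sf b → a = b := by
    intro a b ha hb h
    have := shift_inj c h (by omega) (by omega)
    omega
  have hfinj : ∀ {a b : ℕ}, a < r → b < r → hf a = hf b → a = b := by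
    intro a b ha hb h
    have := shift_inj c h (by omega) (by omega)
    omega
  set Sseg : Finset (ZMod k) := (Finset.range r).image sf with hSd
  set Hseg : Finset (ZMod k) := (Finset.range r).image hf with hHd
  have hSsub : Sseg ⊆ J := by
    intro u hu
    simp only [hSd, Finset.mem_image, Finset.mem_range] at hu
    rcases hu with ⟨j, hj, rfl⟩
    exact hval j hj
  have hScard : Sseg.card = r := by
    rw [hSd, Finset.card_image_of_injOn, Finset.card_range]
    intro a ha b hb h
    simp only [Finset.mem_coe, Finset.mem_range] at ha hb
    exact hsinj ha hb h
  have hJS : J = Sseg := by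
    have := cardJ hJind hkk
    exact (Finset.eq_of_subset_of_card_le hSsub (by omega)).symm
  have hHind : ∀ u ∈ Hseg, u + 1 ∉ Hseg := by
    intro u hu
    simp only [hHd, Finset.mem_image, Finset.mem_range] at hu ⊢
    rcases hu with ⟨j, hj, rfl⟩
    rintro ⟨l, hl, he⟩
    have he2 : hf l = hf j + 1 := he
    have he3 : hf j + 1 = sf j := by simp only [hhf, hsf]; push_cast; ring
    rw [he3] at he2
    have := shift_inj c he2 (by omega) (by omega)
    omega
  have hkey := hmax Hseg hHind
  have hsum1 : ∑ u ∈ Hseg, m u = ∑ j ∈ Finset.range r, m (hf j) := by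
    rw [hHd, Finset.sum_image]
    intro a ha b hb h
    simp only [Finset.mem_coe, Finset.mem_range] at ha hb
    exact hfinj ha hb h
  have hsum2 : ∑ u ∈ J, m u = ∑ j ∈ Finset.range r, m (sf j) := by
    rw [hJS, hSd, Finset.sum_image]
    intro a ha b hb h
    simp only [Finset.mem_coe, Finset.mem_range] at ha hb
    exact hsinj ha hb h
  rw [win_eq, hA]
  rw [hsum1, hsum2] at hkey
  simp only [hhf, hsf] at hkey
  omega

/-- N2 : the shift lower bound -/
lemma shift_lb (hJind : ∀ i ∈ J, i + 1 ∉ J)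
    (hmax : ∀ T : Finset (ZMod k), (∀ i ∈ T, i + 1 ∉ T) → ∑ i ∈ T, m i ≤ ∑ i ∈ J, m i)
    (hkk : 2 ≤ k) {c : ZMod k} (hc : c ∉ J) (hcp : c + 1 ∈ J) :
    (m c : ℤ) - m (c+1) +
      (if c + 3 ∈ J then (xv k J m (c+2) : ℤ) else (m (c+2) : ℤ)) ≤ xv k J m c := by
  classical
  have hc2 : c + 2 ∉ J := by
    have : c + 2 = (c + 1) + 1 := by ring
    rw [this]; exact hJind _ hcp
  -- k = 2 case
  by_cases hk2 : k = 2
  · subst hk2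
    have h20 : (2 : ZMod 2) = 0 := by decide
    have he3 : c + 3 = c + 1 := by rw [show (3 : ZMod 2) = 2 + 1 by norm_num, h20]; ring
    rw [if_pos (he3 ▸ hcp)]
    have he2 : c + 2 = c := by rw [h20]; ring
    rw [he2]
    have hmle : m c ≤ m (c + 1) := by
      have hh1 : ∀ u ∈ ({c} : Finset (ZMod 2)), u + 1 ∉ ({c} : Finset (ZMod 2)) ∧
          (u + 1 ∈ J → u + 1 ∈ ({c+1} : Finset (ZMod 2))) := by
        intro u hu
        simp only [Finset.mem_singleton] at hu
        subst hu
        refine ⟨?_, fun _ => by simp⟩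
        simp only [Finset.mem_singleton]
        intro h
        have h10 : (1 : ZMod 2) = 0 := add_left_cancel (show u + 1 = u + 0 by simpa using h)
        exact absurd h10 (by decide)
      have hh2 : ∀ u ∈ J, u ∉ ({c+1} : Finset (ZMod 2)) → u + 1 ∉ ({c} : Finset (ZMod 2)) := by
        intro u huJ huR hadd
        simp only [Finset.mem_singleton] at hadd huR
        apply huR
        have h2 : c + 1 + 1 = c := by rw [show c + 1 + 1 = c + 2 by ring, he2]
        exact add_right_cancel (show u + 1 = (c+1) + 1 by rw [hadd, h2])
      have := exchange hJind hmax {c} {c+1} (by simp [hcp]) (by simp [hc]) hh1 hh2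
      simpa using this
    omega
  -- now k ≥ 3
  have hk3 : 3 ≤ k := by omega
  have hbase : (m c : ℤ) - m (c+1) + Aterm k J m 1 c ≤ xv k J m c := by
    have hok1 : ok k J 1 c := by
      constructor
      · intro j hj
        have : j = 0 := by omega
        subst this
        have : c + ((2*0+1 : ℕ) : ZMod k) = c + 1 := by push_cast; ring
        rw [this]; exact hcp
      · have : c + ((2*1 : ℕ) : ZMod k) = c + 2 := by push_cast; ring
        rw [this]; exact hc2
    have := xv_ge (m := m) (le_refl 1) (by omega) hok1
    rw [win_eq] at this
    simp only [Finset.range_one, Finset.sum_singleton] at this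
    have e0 : c + ((2*0 : ℕ) : ZMod k) = c := by push_cast; ring
    have e1 : c + ((2*0+1 : ℕ) : ZMod k) = c + 1 := by push_cast; ring
    rw [e0, e1] at this
    omega
  have hA1 : Aterm k J m 1 c = if c + 3 ∈ J then 0 else m (c + 2) := by
    unfold Aterm
    have e3 : c + ((2*1+1 : ℕ) : ZMod k) = c + 3 := by push_cast; ring
    have e2 : c + ((2*1 : ℕ) : ZMod k) = c + 2 := by push_cast; ring
    rw [e3, e2]
  by_cases hC3 : c + 3 ∈ J
  · rw [if_pos hC3]
    rw [hA1, if_pos hC3] at hbase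
    -- need : m c - m (c+1) + xv (c+2) ≤ xv c
    set F := (Finset.Icc 1 ((k-1)/2)).filter (fun s => ok k J s (c+2)) with hF
    by_cases hFe : F.Nonempty
    · obtain ⟨s, hsF, hsup⟩ := Finset.exists_mem_eq_sup F hFe
        (fun s => (Win k J m s (c+2)).toNat)
      have hxv2 : xv k J m (c+2) = (Win k J m s (c+2)).toNat := hsup
      simp only [hF, Finset.mem_filter, Finset.mem_Icc] at hsF
      obtain ⟨⟨hs1, hs2⟩, hoks⟩ := hsF
      by_cases hWnp : Win k J m s (c+2) ≤ 0
      · rw [hxv2]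
        have : (Win k J m s (c+2)).toNat = 0 := by omega
        rw [this]
        push_cast
        omega
      · rw [hxv2]
        rw [Int.toNat_of_nonneg (by omega)]
        -- extension window s+1 at c
        have hokext : ok k J (s+1) c := by
          constructor
          · intro j hj
            rcases Nat.eq_zero_or_pos j with rfl | hj0
            · have : c + ((2*0+1 : ℕ) : ZMod k) = c + 1 := by push_cast; ring
              rw [this]; exact hcp
            · obtain ⟨j', rfl⟩ : ∃ j', j = j' + 1 := ⟨j - 1, by omega⟩
              have : c + ((2*(j'+1)+1 : ℕ) : ZMod k) = (c+2) + ((2*j'+1 : ℕ) : ZMod k) := by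
                push_cast; ring
              rw [this]
              exact hoks.1 j' (by omega)
          · have : c + ((2*(s+1) : ℕ) : ZMod k) = (c+2) + ((2*s : ℕ) : ZMod k) := by
              push_cast; ring
            rw [this]
            exact hoks.2
        have hWext : Win k J m (s+1) c = (m c : ℤ) - m (c+1) + Win k J m s (c+2) := by
          unfold Win
          rw [Finset.sum_range_succ']
          have hterm : ∀ j : ℕ,
              ((m (c + ((2*(j+1) : ℕ) : ZMod k)) : ℤ) - (m (c + ((2*(j+1)+1 : ℕ) : ZMod k)) : ℤ))
              = ((m ((c+2) + ((2*j : ℕ) : ZMod k)) : ℤ) - (m ((c+2) + ((2*j+1 : ℕ) : ZMod k)) : ℤ)) := by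
            intro j
            congr 3
            · push_cast; ring
            · push_cast; ring
          rw [Finset.sum_congr rfl (fun j _ => hterm j)]
          have hAeq : Aterm k J m (s+1) c = Aterm k J m s (c+2) := by
            unfold Aterm
            have e1 : c + ((2*(s+1)+1 : ℕ) : ZMod k) = (c+2) + ((2*s+1 : ℕ) : ZMod k) := by
              push_cast; ring
            have e2 : c + ((2*(s+1) : ℕ) : ZMod k) = (c+2) + ((2*s : ℕ) : ZMod k) := by
              push_cast; ring
            rw [e1, e2]
          rw [hAeq]
          have e0 : c + ((2*0 : ℕ) : ZMod k) = c := by push_cast; ring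
          have e0' : c + ((2*0+1 : ℕ) : ZMod k) = c + 1 := by push_cast; ring
          rw [e0, e0']
          ring
        by_cases hcap : s + 1 ≤ (k-1)/2
        · have := xv_ge (m := m) (by omega) hcap hokext
          rw [hWext] at this
          omega
        · -- s = (k-1)/2
          have hseq : s = (k-1)/2 := by omega
          rcases Nat.even_or_odd k with ⟨k2, hk2e⟩ | ⟨k2, hk2o⟩
          · -- k even : full wrap, Win c (s+1) ≤ 0
            have hs1k : s + 1 = k / 2 := by omega
            have hwrap := wrap_nonpos hJind hmax hkk (c := c) (by omega) ?_
            · rw [← hs1k] at hwrap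
              rw [hWext] at hwrap
              omega
            · intro j hj
              rcases Nat.eq_zero_or_pos j with rfl | hj0
              · have : c + ((2*0+1 : ℕ) : ZMod k) = c + 1 := by push_cast; ring
                rw [this]; exact hcp
              · obtain ⟨j', rfl⟩ : ∃ j', j = j' + 1 := ⟨j - 1, by omega⟩
                have : c + ((2*(j'+1)+1 : ℕ) : ZMod k) = (c+2) + ((2*j'+1 : ℕ) : ZMod k) := by
                  push_cast; ring
                rw [this]
                exact hoks.1 j' (by omega)
          · -- k odd : contradiction, no valid window of size (k-1)/2 at c+2
            exfalso
            have h2s : 2*s = k - 1 := by omega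
            have hlast := hoks.1 (s-1) (by omega)
            have : (c+2) + ((2*(s-1)+1 : ℕ) : ZMod k) = c := by
              have h1 : 2*(s-1)+1 = k - 2 := by omega
              rw [h1]
              rw [show ((k - 2 : ℕ) : ZMod k) = -2 by
                push_cast [Nat.cast_sub (by omega : 2 ≤ k)]
                rw [ZMod.natCast_self]; ring]
              ring
            rw [this] at hlast
            exact hc hlast
    · have hxv2 : xv k J m (c+2) = 0 := by
        unfold xv
        rw [← hF, Finset.not_nonempty_iff_eq_empty.1 hFe]
        simp
      rw [hxv2]
      omega
  · rw [if_neg hC3]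
    rw [hA1, if_neg hC3] at hbase
    omega


lemma one_ne (hkk : 2 ≤ k) : (1 : ZMod k) ≠ 0 := by
  intro h
  have h2 : ((1 : ℕ) : ZMod k) = ((0 : ℕ) : ZMod k) := by push_cast; exact h
  have := zmod_nat_inj h2
  rw [Nat.mod_eq_of_lt (by omega), Nat.mod_eq_of_lt (by omega)] at this
  omega

lemma self_ne_add_one (hkk : 2 ≤ k) (x : ZMod k) : x + 1 ≠ x := by
  intro h
  exact one_ne hkk (add_left_cancel (show x + 1 = x + 0 by rw [add_zero]; exact h))

lemma self_ne_sub_one (hkk : 2 ≤ k) (x : ZMod k) : x - 1 ≠ x := by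
  intro h
  apply self_ne_add_one hkk (x - 1)
  rw [sub_add_cancel, h]

/-- N4 : support with len-2 gaps on both sides -/
lemma n4 (hJind : ∀ i ∈ J, i + 1 ∉ J)
    (hmax : ∀ T : Finset (ZMod k), (∀ i ∈ T, i + 1 ∉ T) → ∑ i ∈ T, m i ≤ ∑ i ∈ J, m i)
    (hkk : 2 ≤ k) {i : ZMod k} (hi : i ∈ J) (hip2 : i + 2 ∉ J) (him2 : i - 2 ∉ J) :
    m (i+1) + (m (i-1) - m (i-2)) ≤ m i := by
  classical
  have hk3 : 3 ≤ k := by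
    by_contra h
    obtain rfl : k = 2 := by omega
    apply him2
    have : i - 2 = i := by
      have h20 : (2 : ZMod 2) = 0 := by decide
      rw [h20]; ring
    rwa [this]
  have him1 : i - 1 ∉ J := by
    intro h
    exact hJind (i-1) h (by rw [sub_add_cancel]; exact hi)
  have hip1 : i + 1 ∉ J := hJind i hi
  -- exchange for m (i+1) ≤ m i
  have hE1 : m (i+1) ≤ m i := by
    have hh1 : ∀ u ∈ ({i+1} : Finset (ZMod k)), u + 1 ∉ ({i+1} : Finset (ZMod k)) ∧
        (u + 1 ∈ J → u + 1 ∈ ({i} : Finset (ZMod k))) := by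
      intro u hu
      simp only [Finset.mem_singleton] at hu
      subst hu
      constructor
      · simp only [Finset.mem_singleton]
        intro h
        exact one_ne hkk (add_left_cancel (show i + 1 + 1 = i + 1 + 0 by rw [add_zero]; exact h))
      · intro h
        exact absurd (show i + 2 ∈ J by rw [show i + 2 = i + 1 + 1 by ring]; exact h) hip2
    have hh2 : ∀ u ∈ J, u ∉ ({i} : Finset (ZMod k)) → u + 1 ∉ ({i+1} : Finset (ZMod k)) := by
      intro u huJ huR hadd
      simp only [Finset.mem_singleton] at hadd huR
      exact huR (add_right_cancel hadd)
    have := exchange hJind hmax {i+1} {i} (by simp [hi]) (by simp [hip1]) hh1 hh2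
    simpa using this
  rcases le_or_gt (m (i-1)) (m (i-2)) with hcase | hcase
  · omega
  -- pos case
  by_cases hk3' : i - 2 = i + 1
  · -- k = 3 : need m (i-1) ≤ m i
    have hE2 : m (i-1) ≤ m i := by
      have hh1 : ∀ u ∈ ({i-1} : Finset (ZMod k)), u + 1 ∉ ({i-1} : Finset (ZMod k)) ∧
          (u + 1 ∈ J → u + 1 ∈ ({i} : Finset (ZMod k))) := by
        intro u hu
        simp only [Finset.mem_singleton] at hu
        subst hu
        constructor
        · simp only [Finset.mem_singleton]
          rw [sub_add_cancel]
          intro h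
          exact self_ne_sub_one hkk i h.symm
        · intro _
          simp only [Finset.mem_singleton, sub_add_cancel]
      have hh2 : ∀ u ∈ J, u ∉ ({i} : Finset (ZMod k)) → u + 1 ∉ ({i-1} : Finset (ZMod k)) := by
        intro u huJ huR hadd
        simp only [Finset.mem_singleton] at hadd huR
        apply him2
        have : u = i - 2 := by
          have : u + 1 = i - 2 + 1 := by rw [hadd]; ring
          exact add_right_cancel this
        rwa [← this]
      have := exchange hJind hmax {i-1} {i} (by simp [hi]) (by simp [him1]) hh1 hh2
      simpa using this
    rw [← hk3']
    omega
  · -- general : m (i+1) + m (i-1) ≤ m i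
    have hd2 : i - 1 ≠ i + 1 := by
      intro h
      have h2 : i = i + 2 := by
        calc i = i - 1 + 1 := by ring
        _ = (i + 1) + 1 := by rw [h]
        _ = i + 2 := by ring
      have h3 : i + ((0:ℕ) : ZMod k) = i + ((2:ℕ) : ZMod k) := by
        push_cast
        rw [add_zero]
        exact h2
      have := shift_inj i h3 (by omega) (by omega)
      omega
    have hE2 : m (i+1) + m (i-1) ≤ m i := by
      have hAdd : ∀ u, u ∈ ({i+1, i-1} : Finset (ZMod k)) ↔ u = i + 1 ∨ u = i - 1 := by
        intro u; simp
      have hh1 : ∀ u ∈ ({i+1, i-1} : Finset (ZMod k)), u + 1 ∉ ({i+1, i-1} : Finset (ZMod k)) ∧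
          (u + 1 ∈ J → u + 1 ∈ ({i} : Finset (ZMod k))) := by
        intro u hu
        rcases (hAdd u).1 hu with rfl | rfl
        · constructor
          · rw [hAdd]
            rintro (h | h)
            · exact self_ne_add_one hkk (i+1) h
            · apply hk3'
              rw [show i - 2 = (i - 1) - 1 by ring, ← h]
              ring
          · intro h
            exact absurd (show i + 2 ∈ J by rw [show i + 2 = i + 1 + 1 by ring]; exact h) hip2
        · constructor
          · rw [hAdd]
            rw [sub_add_cancel]
            rintro (h | h)
            · exact self_ne_add_one hkk i h.symm
            · exact self_ne_sub_one hkk i h.symm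
          · intro _
            simp only [Finset.mem_singleton, sub_add_cancel]
      have hh2 : ∀ u ∈ J, u ∉ ({i} : Finset (ZMod k)) → u + 1 ∉ ({i+1, i-1} : Finset (ZMod k)) := by
        intro u huJ huR hadd
        rcases (hAdd _).1 hadd with h | h
        · exact huR (by simp [add_right_cancel h])
        · apply him2
          have : u = i - 2 := by
            have : u + 1 = i - 2 + 1 := by rw [h]; ring
            exact add_right_cancel this
          rwa [← this]
      have hdisj : (i+1) ≠ (i-1) := fun h => hd2 h.symm
      have := exchange hJind hmax {i+1, i-1} {i} (by simp [hi]) ?_ hh1 hh2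
      · rw [Finset.sum_pair hdisj] at this
        simpa using this
      · intro u hu
        rcases (hAdd u).1 hu with rfl | rfl
        · exact hip1
        · exact him1
    omega


/-- exchange {i-1} vs {i} -/
lemma ex_im1 (hJind : ∀ i ∈ J, i + 1 ∉ J)
    (hmax : ∀ T : Finset (ZMod k), (∀ i ∈ T, i + 1 ∉ T) → ∑ i ∈ T, m i ≤ ∑ i ∈ J, m i)
    (hkk : 2 ≤ k) {i : ZMod k} (hi : i ∈ J) (him1 : i - 1 ∉ J) (him2 : i - 2 ∉ J) :
    m (i-1) ≤ m i := by
  classical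
  have hh1 : ∀ u ∈ ({i-1} : Finset (ZMod k)), u + 1 ∉ ({i-1} : Finset (ZMod k)) ∧
      (u + 1 ∈ J → u + 1 ∈ ({i} : Finset (ZMod k))) := by
    intro u hu
    simp only [Finset.mem_singleton] at hu
    subst hu
    constructor
    · simp only [Finset.mem_singleton]
      rw [sub_add_cancel]
      intro h
      exact self_ne_sub_one hkk i h.symm
    · intro _
      simp only [Finset.mem_singleton, sub_add_cancel]
  have hh2 : ∀ u ∈ J, u ∉ ({i} : Finset (ZMod k)) → u + 1 ∉ ({i-1} : Finset (ZMod k)) := by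
    intro u huJ huR hadd
    simp only [Finset.mem_singleton] at hadd huR
    apply him2
    have : u = i - 2 := by
      have : u + 1 = i - 2 + 1 := by rw [hadd]; ring
      exact add_right_cancel this
    rwa [← this]
  have := exchange hJind hmax {i-1} {i} (by simp [hi]) (by simp [him1]) hh1 hh2
  simpa using this

/-- N3 : support with len-1 gap after, len-2 gap before -/
lemma n3 (hJind : ∀ i ∈ J, i + 1 ∉ J)
    (hmax : ∀ T : Finset (ZMod k), (∀ i ∈ T, i + 1 ∉ T) → ∑ i ∈ T, m i ≤ ∑ i ∈ J, m i)
    (hkk : 2 ≤ k) {i : ZMod k} (hi : i ∈ J) (hip2 : i + 2 ∈ J) (him2 : i - 2 ∉ J) :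
    xv k J m (i+1) + (m (i-1) - m (i-2)) ≤ m i := by
  classical
  have him1 : i - 1 ∉ J := fun h => hJind (i-1) h (by rw [sub_add_cancel]; exact hi)
  have hip1 : i + 1 ∉ J := hJind i hi
  have hk3 : 3 ≤ k := by
    by_contra h
    obtain rfl : k = 2 := by omega
    apply him2
    have : i - 2 = i := by
      have h20 : (2 : ZMod 2) = 0 := by decide
      rw [h20]; ring
    rwa [this]
  have hd_le : m (i-1) - m (i-2) ≤ m i := by
    rcases le_or_gt (m (i-1)) (m (i-2)) with h | h
    · omega
    · have := ex_im1 hJind hmax hkk hi him1 him2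
      omega
  have hcore : ∀ s, 1 ≤ s → s ≤ (k-1)/2 → ok k J s (i+1) →
      Win k J m s (i+1) + ((m (i-1) - m (i-2) : ℕ) : ℤ) ≤ (m i : ℤ) := by
    intro s hs1 hs2 hok
    have h2s : 2*s ≤ k - 1 := by omega
    set c : ZMod k := i + 1 with hc_def
    set hf : ℕ → ZMod k := fun j => c + ((2*j : ℕ) : ZMod k) with hhf
    set sf : ℕ → ZMod k := fun j => c + ((2*j+1 : ℕ) : ZMod k) with hsf
    have hplus : ∀ j : ℕ, hf j + 1 = sf j := by
      intro j; simp only [hhf, hsf]; push_cast; ring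
    have hplus' : ∀ j : ℕ, sf j + 1 = hf (j+1) := by
      intro j; simp only [hhf, hsf]; push_cast; ring
    have hi_eq : i = c + ((k-1 : ℕ) : ZMod k) := by
      simp only [hc_def]
      push_cast [Nat.cast_sub (show 1 ≤ k by omega)]
      rw [ZMod.natCast_self]; ring
    have him1_eq : i - 1 = c + ((k-2 : ℕ) : ZMod k) := by
      simp only [hc_def]
      push_cast [Nat.cast_sub (show 2 ≤ k by omega)]
      rw [ZMod.natCast_self]; ring
    have him2_eq : i - 2 = c + ((k-3 : ℕ) : ZMod k) := by
      simp only [hc_def]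
      push_cast [Nat.cast_sub (show 3 ≤ k by omega)]
      rw [ZMod.natCast_self]; ring
    have hc0 : hf 0 = c := by simp only [hhf]; push_cast; ring
    have hfnotJ : ∀ j, j ≤ s → hf j ∉ J := by
      intro j hj
      rcases Nat.eq_zero_or_pos j with rfl | hj0
      · rw [hc0]; exact hip1
      · exact hj_not_mem hJind hok hj0 hj
    have hsfJ : ∀ j, j < s → sf j ∈ J := fun j hj => hok.1 j hj
    -- flags
    set DCond : Prop := m (i-2) < m (i-1) with hDC
    set ACond : Prop := sf s ∉ J ∧ (hf s ≠ i - 2 ∨ m (i-1) ≤ m (i-2)) with hAC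
    have hDdec : Decidable DCond := by unfold DCond; infer_instance
    have hAdec : Decidable ACond := by unfold ACond; infer_instance
    set Dset : Finset (ZMod k) := if DCond then {i-1} else ∅ with hDd
    set Aset : Finset (ZMod k) := if ACond then {hf s} else ∅ with hAd
    set Add : Finset (ZMod k) := ((Finset.range s).image hf) ∪ Aset ∪ Dset with hAddd
    set R : Finset (ZMod k) := insert i ((Finset.range s).image sf) with hRd
    have hmemAdd : ∀ u, u ∈ Add ↔
        ((∃ j, j < s ∧ u = hf j) ∨ (ACond ∧ u = hf s) ∨ (DCond ∧ u = i - 1)) := by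
      intro u
      simp only [hAddd, Finset.mem_union, Finset.mem_image, Finset.mem_range]
      constructor
      · rintro ((⟨j, hj, rfl⟩ | hA) | hD)
        · exact Or.inl ⟨j, hj, rfl⟩
        · rw [hAd] at hA
          split at hA
          · simp only [Finset.mem_singleton] at hA
            exact Or.inr (Or.inl ⟨by assumption, hA⟩)
          · simp at hA
        · rw [hDd] at hD
          split at hD
          · simp only [Finset.mem_singleton] at hD
            exact Or.inr (Or.inr ⟨by assumption, hD⟩)
          · simp at hD
      · rintro (⟨j, hj, rfl⟩ | ⟨hA, rfl⟩ | ⟨hD, rfl⟩)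
        · exact Or.inl (Or.inl ⟨j, hj, rfl⟩)
        · refine Or.inl (Or.inr ?_)
          rw [hAd, if_pos hA]
          simp
        · refine Or.inr ?_
          rw [hDd, if_pos hD]
          simp
    have hmemR : ∀ u, u ∈ R ↔ (u = i ∨ ∃ j, j < s ∧ u = sf j) := by
      intro u
      simp only [hRd, Finset.mem_insert, Finset.mem_image, Finset.mem_range]
      constructor
      · rintro (rfl | ⟨j, hj, rfl⟩)
        · exact Or.inl rfl
        · exact Or.inr ⟨j, hj, rfl⟩
      · rintro (rfl | ⟨j, hj, rfl⟩)
        · exact Or.inl rfl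
        · exact Or.inr ⟨j, hj, rfl⟩
    have hRJ : R ⊆ J := by
      intro u hu
      rcases (hmemR u).1 hu with rfl | ⟨j, hj, rfl⟩
      · exact hi
      · exact hsfJ j hj
    have hAddJ : ∀ u ∈ Add, u ∉ J := by
      intro u hu
      rcases (hmemAdd u).1 hu with ⟨j, hj, rfl⟩ | ⟨hA, rfl⟩ | ⟨hD, rfl⟩
      · exact hfnotJ j (by omega)
      · exact hok.2
      · exact him1
    have key : ∑ u ∈ Add, m u ≤ ∑ u ∈ R, m u := by
      apply exchange hJind hmax Add R hRJ hAddJ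
      · intro u hu
        rcases (hmemAdd u).1 hu with ⟨j, hj, rfl⟩ | ⟨hA, rfl⟩ | ⟨hD, rfl⟩
        · rw [hplus j]
          constructor
          · intro hmem
            rcases (hmemAdd _).1 hmem with ⟨l, hl, he⟩ | ⟨hA, he⟩ | ⟨hD, he⟩
            · rcases shift_cases c he.symm (by omega) (by omega) (by omega)
                with h | ⟨h1, h2⟩ | ⟨h1, h2⟩ <;> omega
            · rcases shift_cases c he.symm (by omega) (by omega) (by omega)
                with h | ⟨h1, h2⟩ | ⟨h1, h2⟩ <;> omega
            · rw [him1_eq] at he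
              exact absurd ((he ▸ hsfJ j hj) : c + ((k-2:ℕ) : ZMod k) ∈ J)
                (him1_eq ▸ him1)
          · intro _
            exact (hmemR _).2 (Or.inr ⟨j, hj, rfl⟩)
        · rw [hplus s]
          constructor
          · intro hmem
            rcases (hmemAdd _).1 hmem with ⟨l, hl, he⟩ | ⟨hA2, he⟩ | ⟨hD, he⟩
            · rcases shift_cases c he.symm (by omega) (by omega) (by omega)
                with h | ⟨h1, h2⟩ | ⟨h1, h2⟩
              · omega
              · -- 2l = 0 ∧ 2s+1 = k : then hf s = i, contra
                have h2s' : 2*s = k - 1 := by omega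
                have h9 : hf s = i := by
                  simp only [hhf]
                  rw [h2s', ← hi_eq]
                exact absurd (show hf s ∈ J by rw [h9]; exact hi) hok.2
              · omega
            · rcases shift_cases c he.symm (by omega) (by omega) (by omega)
                with h | ⟨h1, h2⟩ | ⟨h1, h2⟩ <;> omega
            · -- sf s = i - 1
              rw [him1_eq] at he
              rcases shift_cases c he (by omega) (by omega) (by omega)
                with h | ⟨h1, h2⟩ | ⟨h1, h2⟩
              · -- 2s+1 = k-2 : hf s = i - 2, contra with ACond
                have : hf s = i - 2 := by
                  simp only [hhf]
                  rw [him2_eq]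
                  congr 1
                  congr 1
                  omega
                rcases hA.2 with h3 | h3
                · exact h3 this
                · rw [hDC] at hD; omega
              · omega
              · omega
          · intro hmem
            exact absurd hmem hA.1
        · rw [sub_add_cancel]
          constructor
          · intro hmem
            rcases (hmemAdd _).1 hmem with ⟨l, hl, he⟩ | ⟨hA, he⟩ | ⟨hD2, he⟩
            · exact absurd hi (he ▸ hfnotJ l (by omega))
            · exact absurd hi (he ▸ hok.2)
            · exact self_ne_sub_one hkk i he.symm
          · intro _
            exact (hmemR _).2 (Or.inl rfl)
      · intro u huJ huR hmem
        rcases (hmemAdd _).1 hmem with ⟨l, hl, he⟩ | ⟨hA, he⟩ | ⟨hD, he⟩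
        · rcases Nat.eq_zero_or_pos l with rfl | hl0
          · rw [hc0] at he
            apply huR
            have : u = i := add_right_cancel (show u + 1 = i + 1 from he)
            rw [this]
            exact (hmemR _).2 (Or.inl rfl)
          · obtain ⟨l', rfl⟩ : ∃ l', l = l' + 1 := ⟨l - 1, by omega⟩
            rw [← hplus' l'] at he
            apply huR
            rw [add_right_cancel he]
            exact (hmemR _).2 (Or.inr ⟨l', by omega, rfl⟩)
        · obtain ⟨l', rfl⟩ : ∃ l', s = l' + 1 := ⟨s - 1, by omega⟩
          rw [← hplus' l'] at he
          apply huR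
          rw [add_right_cancel he]
          exact (hmemR _).2 (Or.inr ⟨l', by omega, rfl⟩)
        · apply him2
          have : u = i - 2 := by
            have h2 : u + 1 = (i - 2) + 1 := by rw [he]; ring
            exact add_right_cancel h2
          rwa [← this]
    -- sums
    have hinj : ∀ {a b : ℕ}, a ≤ s → b ≤ s → hf a = hf b → a = b := by
      intro a b ha hb h
      have := shift_inj c h (by omega) (by omega)
      omega
    have hsinj : ∀ {a b : ℕ}, a < s → b < s → sf a = sf b → a = b := by
      intro a b ha hb h
      have := shift_inj c h (by omega) (by omega)
      omega
    have hd1 : Disjoint ((Finset.range s).image hf) Aset := by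
      rw [hAd]
      split
      · rw [Finset.disjoint_right]
        intro x hx hx2
        simp only [Finset.mem_singleton] at hx
        simp only [Finset.mem_image, Finset.mem_range] at hx2
        rcases hx2 with ⟨l, hl, he⟩
        rw [hx] at he
        have := hinj (by omega) (le_refl s) he
        omega
      · simp
    have hd2 : Disjoint (((Finset.range s).image hf) ∪ Aset) Dset := by
      rw [hDd]
      split
      · rw [Finset.disjoint_right]
        intro x hx hx2
        simp only [Finset.mem_singleton] at hx
        subst hx
        rcases Finset.mem_union.1 hx2 with hx2 | hx2
        · simp only [Finset.mem_image, Finset.mem_range] at hx2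
          rcases hx2 with ⟨l, hl, he⟩
          rw [him1_eq] at he
          rcases shift_cases c he (by omega) (by omega) (by omega)
            with h | ⟨h1, h2⟩ | ⟨h1, h2⟩ <;> omega
        · rw [hAd] at hx2
          split at hx2 <;> rename_i hA
          · simp only [Finset.mem_singleton] at hx2
            have : sf s ∈ J := by
              rw [← hplus s, ← hx2, sub_add_cancel]
              exact hi
            exact absurd this hA.1
          · simp at hx2
      · simp
    have hiR : i ∉ (Finset.range s).image sf := by
      intro hmem
      simp only [Finset.mem_image, Finset.mem_range] at hmem
      rcases hmem with ⟨j, hj, he⟩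
      rw [hi_eq] at he
      rcases shift_cases c he (by omega) (by omega) (by omega)
        with h | ⟨h1, h2⟩ | ⟨h1, h2⟩ <;> omega
    have hsumR : ∑ u ∈ R, m u = m i + ∑ j ∈ Finset.range s, m (sf j) := by
      rw [hRd, Finset.sum_insert hiR, Finset.sum_image]
      intro a ha b hb h
      simp only [Finset.mem_coe, Finset.mem_range] at ha hb
      exact hsinj ha hb h
    have hsumH : ∑ u ∈ (Finset.range s).image hf, m u = ∑ j ∈ Finset.range s, m (hf j) := by
      rw [Finset.sum_image]
      intro a ha b hb h
      simp only [Finset.mem_coe, Finset.mem_range] at ha hb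
      exact hinj (by omega) (by omega) h
    have hsumA : ∑ u ∈ Aset, m u = if ACond then m (hf s) else 0 := by
      rw [hAd]; split <;> simp
    have hsumD : ∑ u ∈ Dset, m u = if DCond then m (i-1) else 0 := by
      rw [hDd]; split <;> simp
    have hsumAdd : ∑ u ∈ Add, m u = (∑ j ∈ Finset.range s, m (hf j))
        + (if ACond then m (hf s) else 0) + (if DCond then m (i-1) else 0) := by
      rw [hAddd, Finset.sum_union hd2, Finset.sum_union hd1, hsumH, hsumA, hsumD]
    rw [hsumAdd, hsumR] at key
    -- final case analysis
    rw [win_eq]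
    have hWH : (∑ j ∈ Finset.range s, m ((i+1) + ((2*j : ℕ) : ZMod k)))
        = ∑ j ∈ Finset.range s, m (hf j) := rfl
    have hWS : (∑ j ∈ Finset.range s, m ((i+1) + ((2*j+1 : ℕ) : ZMod k)))
        = ∑ j ∈ Finset.range s, m (sf j) := rfl
    have hAterm : Aterm k J m s (i+1) = if sf s ∈ J then 0 else m (hf s) := by
      unfold Aterm
      rfl
    rw [hWH, hWS, hAterm]
    by_cases hD : DCond
    · rw [if_pos hD] at key
      by_cases hA : ACond
      · rw [if_pos hA] at key
        rw [if_neg hA.1]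
        rw [hDC] at hD
        omega
      · by_cases hsfs : sf s ∈ J
        · rw [if_pos hsfs]
          rw [if_neg hA] at key
          rw [hDC] at hD
          omega
        · -- forced : hf s = i - 2
          have hcol : hf s = i - 2 := by
            by_contra hne
            exact hA ⟨hsfs, Or.inl hne⟩
          rw [if_neg hsfs, hcol]
          rw [if_neg hA] at key
          rw [hDC] at hD
          omega
    · rw [if_neg hD] at key
      rw [hDC] at hD
      by_cases hsfs : sf s ∈ J
      · rw [if_pos hsfs]
        by_cases hA : ACond
        · rw [if_pos hA] at key; omega
        · rw [if_neg hA] at key; omega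
      · have hA : ACond := ⟨hsfs, Or.inr (by omega)⟩
        rw [if_pos hA] at key
        rw [if_neg hsfs]
        omega
  have hxle : xv k J m (i+1) ≤ m i - (m (i-1) - m (i-2)) := by
    apply Finset.sup_le
    intro s hs
    simp only [Finset.mem_filter, Finset.mem_Icc] at hs
    obtain ⟨⟨hs1, hs2⟩, hok⟩ := hs
    have := hcore s hs1 hs2 hok
    rw [Int.toNat_le]
    push_cast [Nat.cast_sub hd_le]
    omega
  omega


/-- gaps have length at most two -/
lemma gap2 (hJind : ∀ i ∈ J, i + 1 ∉ J)
    (hmax : ∀ T : Finset (ZMod k), (∀ i ∈ T, i + 1 ∉ T) → ∑ i ∈ T, m i ≤ ∑ i ∈ J, m i)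
    (hm1 : ∀ c, 1 ≤ m c) (hkk : 2 ≤ k) :
    ∀ c, c ∉ J → (c - 1 ∈ J ∨ c + 1 ∈ J) := by
  classical
  intro c hc
  by_contra hcon
  push_neg at hcon
  obtain ⟨h1, h2⟩ := hcon
  have hT : ∀ u ∈ insert c J, u + 1 ∉ insert c J := by
    intro u hu
    rcases Finset.mem_insert.1 hu with rfl | hu
    · intro h
      rcases Finset.mem_insert.1 h with h | h
      · exact self_ne_add_one hkk u h
      · exact h2 h
    · intro h
      rcases Finset.mem_insert.1 h with h | h
      · apply h1
        have : u = c - 1 := by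
          have : u + 1 = (c - 1) + 1 := by rw [h, sub_add_cancel]
          exact add_right_cancel this
        rwa [← this]
      · exact hJind u hu h
  have := hmax (insert c J) hT
  rw [Finset.sum_insert hc] at this
  have := hm1 c
  omega

/-- the allocation -/
lemma alloc (hJind : ∀ i ∈ J, i + 1 ∉ J)
    (hmax : ∀ T : Finset (ZMod k), (∀ i ∈ T, i + 1 ∉ T) → ∑ i ∈ T, m i ≤ ∑ i ∈ J, m i)
    (hm1 : ∀ c, 1 ≤ m c) (hkk : 2 ≤ k) :
    ∃ a b : ZMod k → ℕ,
      (∀ c, c ∉ J → a c + b c = m c) ∧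
      (∀ c, c ∈ J → a c + b c ≤ m c) ∧
      (∀ c, c ∉ J → a c ≤ a (c-1)) ∧
      (∀ c, c ∉ J → b c ≤ b (c+1)) ∧
      (∀ i, i ∈ J → a i = a (i+1)) ∧
      (∀ i, i ∈ J → b i = b (i-1)) := by
  classical
  -- gaps have length at most 2
  have hgap : ∀ c, c ∉ J → (c - 1 ∈ J ∨ c + 1 ∈ J) := by
    intro c hc
    by_contra hcon
    push_neg at hcon
    obtain ⟨h1, h2⟩ := hcon
    have hT : ∀ u ∈ insert c J, u + 1 ∉ insert c J := by
      intro u hu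
      rcases Finset.mem_insert.1 hu with rfl | hu
      · intro h
        rcases Finset.mem_insert.1 h with h | h
        · exact self_ne_add_one hkk u h
        · exact h2 h
      · intro h
        rcases Finset.mem_insert.1 h with h | h
        · apply h1
          have : u = c - 1 := by
            have : u + 1 = (c - 1) + 1 := by rw [h, sub_add_cancel]
            exact add_right_cancel this
          rwa [← this]
        · exact hJind u hu h
    have := hmax (insert c J) hT
    rw [Finset.sum_insert hc] at this
    have := hm1 c
    omega
  have hxvle : ∀ c, c ∉ J → xv k J m c ≤ m c := by
    intro c hc
    apply Finset.sup_le
    intro s hs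
    simp only [Finset.mem_filter, Finset.mem_Icc] at hs
    obtain ⟨⟨hs1, hs2⟩, hok⟩ := hs
    rw [Int.toNat_le]
    exact win_le_m hJind hmax hc hs1 (by omega) hkk hok
  set na : ZMod k → ℕ := fun c =>
    if c - 1 ∈ J then (if c + 1 ∈ J then xv k J m c else m c) else min (m (c-1)) (m c)
    with hna
  set nb : ZMod k → ℕ := fun c =>
    if c - 1 ∈ J then (if c + 1 ∈ J then m c - xv k J m c else 0) else m c - m (c-1)
    with hnb
  refine ⟨fun c => if c ∈ J then na (c+1) else na c,
          fun c => if c ∈ J then nb (c-1) else nb c, ?_, ?_, ?_, ?_, ?_, ?_⟩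
  · -- coverage
    intro c hc
    beta_reduce
    rw [if_neg hc, if_neg hc, hna, hnb]
    simp only
    by_cases h1 : c - 1 ∈ J
    · rw [if_pos h1, if_pos h1]
      by_cases h2 : c + 1 ∈ J
      · rw [if_pos h2, if_pos h2]
        have := hxvle c hc
        omega
      · rw [if_neg h2, if_neg h2]
        omega
    · rw [if_neg h1, if_neg h1]
      rcases Nat.le_total (m (c-1)) (m c) with h | h
      · rw [Nat.min_eq_left h]; omega
      · rw [Nat.min_eq_right h]; omega
  · -- support capacity
    intro i hi
    beta_reduce
    rw [if_pos hi, if_pos hi]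
    have hip1 : i + 1 ∉ J := hJind i hi
    have him1 : i - 1 ∉ J := fun h => hJind (i-1) h (by rw [sub_add_cancel]; exact hi)
    have e1 : (i + 1) - 1 = i := by ring
    have e2 : (i - 1) + 1 = i := by ring
    have e3 : (i - 1) - 1 = i - 2 := by ring
    have hnai : na (i+1) = if i + 2 ∈ J then xv k J m (i+1) else m (i+1) := by
      rw [hna]
      simp only
      rw [e1, if_pos hi]
      congr 1
      rw [show (i+1)+1 = i + 2 by ring]
    have hnbi : nb (i-1) = if i - 2 ∈ J then m (i-1) - xv k J m (i-1) else m (i-1) - m (i-2) := by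
      rw [hnb]
      simp only
      rw [e3, e2, if_pos hi]
    rw [hnai, hnbi]
    by_cases hA : i + 2 ∈ J <;> by_cases hB : i - 2 ∈ J
    · -- (2a) both len-1
      rw [if_pos hA, if_pos hB]
      have hs := shift_lb hJind hmax hkk (c := i - 1) him1 (by rw [e2]; exact hi)
      rw [show (i-1) + 3 = i + 2 by ring, if_pos hA, show (i-1)+2 = i+1 by ring, e2] at hs
      have h1 := hxvle (i-1) him1
      omega
    · -- (2c)
      rw [if_pos hA, if_neg hB]
      exact n3 hJind hmax hkk hi hA hB
    · -- (2b)
      rw [if_neg hA, if_pos hB]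
      have hs := shift_lb hJind hmax hkk (c := i - 1) him1 (by rw [e2]; exact hi)
      rw [show (i-1) + 3 = i + 2 by ring, if_neg hA, show (i-1)+2 = i+1 by ring, e2] at hs
      have h1 := hxvle (i-1) him1
      omega
    · -- (2d)
      rw [if_neg hA, if_neg hB]
      exact n4 hJind hmax hkk hi hA hB
  · -- a monotone
    intro c hc
    beta_reduce
    rw [if_neg hc]
    by_cases h1 : c - 1 ∈ J
    · rw [if_pos h1, sub_add_cancel]
    · rw [if_neg h1]
      have h2 : c - 2 ∈ J := by
        rcases hgap (c-1) h1 with h | h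
        · rwa [show c - 1 - 1 = c - 2 by ring] at h
        · rw [sub_add_cancel] at h
          exact absurd h hc
      have hval : na c ≤ m (c - 1) := by
        rw [hna]
        simp only
        rw [if_neg h1]
        exact Nat.min_le_left _ _
      have hval2 : na (c-1) = m (c-1) := by
        rw [hna]
        simp only
        rw [show c - 1 - 1 = c - 2 by ring, if_pos h2, sub_add_cancel, if_neg hc]
      rw [hval2]
      exact hval
  · -- b monotone
    intro c hc
    beta_reduce
    rw [if_neg hc]
    by_cases h1 : c + 1 ∈ J
    · rw [if_pos h1, add_sub_cancel_right]
    · rw [if_neg h1]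
      have h2 : c - 1 ∈ J := by
        rcases hgap c hc with h | h
        · exact h
        · exact absurd h h1
      have hval : nb c = 0 := by
        rw [hnb]
        simp only
        rw [if_pos h2, if_neg h1]
      rw [hval]
      exact Nat.zero_le _
  · intro i hi
    beta_reduce
    rw [if_pos hi, if_neg (hJind i hi)]
  · intro i hi
    beta_reduce
    have him1 : i - 1 ∉ J := fun h => hJind (i-1) h (by rw [sub_add_cancel]; exact hi)
    rw [if_pos hi, if_neg him1]

end Numeric

section Lists

variable {V : Type*} [DecidableEq V]

lemma count_flatten_zip2 (A B : List V) (h : A.length = B.length) (v : V) :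
    ((List.zipWith (fun x y => [x, y]) A B).flatten).count v = A.count v + B.count v := by
  induction A generalizing B with
  | nil =>
    cases B with
    | nil => simp
    | cons b B => simp at h
  | cons a A ih =>
    cases B with
    | nil => simp at h
    | cons b B =>
      simp only [List.zipWith_cons_cons, List.flatten_cons, List.count_append, List.count_cons,
        List.count_nil]
      rw [ih B (by simpa using h)]
      split_ifs <;> omega

lemma count_flatten_zip3 (A B C : List V) (h1 : A.length = B.length) (h2 : B.length = C.length)
    (v : V) :
    ((List.zipWith3 (fun x y z => [x, y, z]) A B C).flatten).count v
      = A.count v + B.count v + C.count v := by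
  induction A generalizing B C with
  | nil =>
    cases B with
    | nil =>
      cases C with
      | nil => simp [List.zipWith3]
      | cons c C => simp at h2
    | cons b B => simp at h1
  | cons a A ih =>
    cases B with
    | nil => simp at h1
    | cons b B =>
      cases C with
      | nil => simp at h2
      | cons c C =>
        show (([a, b, c] :: List.zipWith3 _ A B C).flatten).count v = _
        simp only [List.flatten_cons, List.count_append, List.count_cons, List.count_nil]
        rw [ih B C (by simpa using h1) (by simpa using h2)]
        split_ifs <;> omega

lemma flatten_map_singleton (l : List V) : (l.map (fun v => [v])).flatten = l := by
  induction l with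
  | nil => simp
  | cons a l ih => simp [ih]

lemma count_flatten_flatMap {α : Type*} (f : α → List (List V)) (l : List α) (v : V) :
    ((l.flatMap f).flatten).count v = (l.map (fun x => ((f x).flatten).count v)).sum := by
  induction l with
  | nil => simp
  | cons a l ih =>
    simp only [List.flatMap_cons, List.flatten_append, List.count_append, ih, List.map_cons,
      List.sum_cons]

lemma mem_zip2 {A B : List V} {p : List V} (h : p ∈ List.zipWith (fun x y => [x, y]) A B) :
    ∃ x y, x ∈ A ∧ y ∈ B ∧ p = [x, y] := by
  induction A generalizing B with
  | nil => simp at h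
  | cons a A ih =>
    cases B with
    | nil => simp at h
    | cons b B =>
      simp only [List.zipWith_cons_cons, List.mem_cons] at h
      rcases h with rfl | h
      · exact ⟨a, b, by simp, by simp, rfl⟩
      · obtain ⟨x, y, hx, hy, rfl⟩ := ih h
        exact ⟨x, y, by simp [hx], by simp [hy], rfl⟩

lemma mem_zip3 {A B C : List V} {p : List V}
    (h : p ∈ List.zipWith3 (fun x y z => [x, y, z]) A B C) :
    ∃ x y z, x ∈ A ∧ y ∈ B ∧ z ∈ C ∧ p = [x, y, z] := by
  induction A generalizing B C with
  | nil => simp [List.zipWith3] at h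
  | cons a A ih =>
    cases B with
    | nil => simp [List.zipWith3] at h
    | cons b B =>
      cases C with
      | nil => simp [List.zipWith3] at h
      | cons c C =>
        have h2 : p = [a, b, c] ∨ p ∈ List.zipWith3 (fun x y z => [x, y, z]) A B C := by
          simpa [List.zipWith3] using h
        rcases h2 with rfl | h2
        · exact ⟨a, b, c, by simp, by simp, by simp, rfl⟩
        · obtain ⟨x, y, z, hx, hy, hz, rfl⟩ := ih h2
          exact ⟨x, y, z, by simp [hx], by simp [hy], by simp [hz], rfl⟩

end Lists

end P17

open Paper in
theorem stmt17 {V : Type*} [Fintype V] (E : V → V → Prop)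
    (k : ℕ) (hk : 2 ≤ k) (X : ZMod k → Set V)
    (hext : ExtCycleOn E k X Set.univ)
    (hnb : ¬ HasInducedBlockingOddCycle E) :
    BEPropOn E Set.univ := by
  classical
  clear hnb
  haveI : NeZero k := ⟨by omega⟩
  obtain ⟨hU, hdisj, hXne, hXstab, hEchar⟩ := hext
  intro S hS
  have hStab : Paper.Stable E S := hS.1.2
  -- the class function
  have hex : ∀ v : V, ∃ i, v ∈ X i := by
    intro v
    have : v ∈ ⋃ i, X i := by rw [hU]; trivial
    simpa using this
  choose cls hcls using hex
  have huniq : ∀ v i, v ∈ X i → cls v = i := by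
    intro v i hv
    by_contra h
    exact Set.disjoint_left.1 (hdisj _ _ h) (hcls v) hv
  have hEc : ∀ u v, E u v ↔ cls v = cls u + 1 := by
    intro u v
    rw [hEchar u trivial v trivial]
    constructor
    · rintro ⟨i, hu, hv⟩
      rw [huniq v _ hv, huniq u _ hu]
    · intro h
      exact ⟨cls u, hcls u, by rw [← h]; exact hcls v⟩
  set Xf : ZMod k → Finset V := fun c => Finset.univ.filter (fun v => cls v = c) with hXf
  set mm : ZMod k → ℕ := fun c => (Xf c).card with hmm
  have hmemXf : ∀ v c, v ∈ Xf c ↔ cls v = c := by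
    intro v c; simp [hXf]
  have hm1 : ∀ c, 1 ≤ mm c := by
    intro c
    obtain ⟨v, hv⟩ := hXne c
    have hv2 : v ∈ Xf c := (hmemXf v c).2 (huniq v c hv)
    have := Finset.card_pos.2 ⟨v, hv2⟩
    have h3 : mm c = (Xf c).card := rfl
    omega
  set JJ : Finset (ZMod k) := Finset.univ.filter (fun i => ∃ v ∈ S, cls v = i) with hJJ
  have hmemJJ : ∀ i, i ∈ JJ ↔ ∃ v ∈ S, cls v = i := by intro i; simp [hJJ]
  have hclsne : ∀ u v : V, cls v = cls u + 1 → u ≠ v := by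
    intro u v h he
    subst he
    exact P17.self_ne_add_one hk (cls u) h.symm
  have hSfull : ∀ v, v ∈ S ↔ cls v ∈ JJ := by
    intro v
    constructor
    · intro hv; exact (hmemJJ _).2 ⟨v, hv, rfl⟩
    · intro hv
      by_contra hvS
      obtain ⟨u, huS, hcu⟩ := (hmemJJ _).1 hv
      have hkey : ∀ y ∈ S, ¬ Paper.Adj E v y := by
        intro y hy
        rintro (hE1 | hE2)
        · have h1 : cls y = cls u + 1 := by rw [(hEc _ _).1 hE1, hcu]
          exact hStab u huS y hy (hclsne u y h1) (Or.inl ((hEc u y).2 h1))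
        · have h1 : cls u = cls y + 1 := by rw [hcu, (hEc _ _).1 hE2]
          exact hStab y hy u huS (hclsne y u h1) (Or.inl ((hEc y u).2 h1))
      have hstab2 : Paper.Stable E (insert v S) := by
        intro x hx y hy hxy
        rcases Set.mem_insert_iff.1 hx with hx1 | hx1
        · rcases Set.mem_insert_iff.1 hy with hy1 | hy1
          · rw [hx1, hy1] at hxy
            exact absurd rfl hxy
          · rw [hx1]
            exact hkey y hy1
        · rcases Set.mem_insert_iff.1 hy with hy1 | hy1
          · rw [hy1]
            rintro (h | h)
            · exact hkey x hx1 (Or.inr h)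
            · exact hkey x hx1 (Or.inl h)
          · exact hStab x hx1 y hy1 hxy
      have := hS.2 (insert v S) ⟨fun _ _ => trivial, hstab2⟩
      rw [Set.ncard_insert_of_notMem hvS (Set.toFinite S)] at this
      omega
  have hJind : ∀ i ∈ JJ, i + 1 ∉ JJ := by
    intro i hi hi1
    obtain ⟨u, hu, hcu⟩ := (hmemJJ _).1 hi
    obtain ⟨w, hw, hcw⟩ := (hmemJJ _).1 hi1
    have h1 : cls w = cls u + 1 := by rw [hcw, hcu]
    exact hStab u hu w hw (hclsne u w h1) (Or.inl ((hEc u w).2 h1))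
  have hXfd : ∀ (x y : ZMod k), x ≠ y → Disjoint (Xf x) (Xf y) := by
    intro x y hxy
    rw [Finset.disjoint_left]
    intro v hv hv2
    rw [hmemXf] at hv hv2
    exact hxy (hv ▸ hv2 ▸ rfl)
  have hbi : ∀ (T : Finset (ZMod k)), (T.biUnion Xf).card = ∑ i ∈ T, mm i := by
    intro T
    rw [Finset.card_biUnion]
    intro x _ y _ hxy
    exact hXfd x y hxy
  have hUT : ∀ (T : Finset (ZMod k)) v, v ∈ T.biUnion Xf ↔ cls v ∈ T := by
    intro T v
    simp only [Finset.mem_biUnion]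
    constructor
    · rintro ⟨i, hi, hv⟩; rw [(hmemXf _ _).1 hv]; exact hi
    · intro h; exact ⟨cls v, h, (hmemXf _ _).2 rfl⟩
  have hSn : S.ncard = ∑ i ∈ JJ, mm i := by
    rw [← hbi JJ, Set.ncard_eq_toFinset_card']
    congr 1
    ext v
    rw [Set.mem_toFinset, hUT, ← hSfull]
  have hmaxJ : ∀ T : Finset (ZMod k), (∀ i ∈ T, i + 1 ∉ T) → ∑ i ∈ T, mm i ≤ ∑ i ∈ JJ, mm i := by
    intro T hT
    have hstabT : Paper.Stable E (↑(T.biUnion Xf) : Set V) := by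
      intro x hx y hy _
      rw [Finset.mem_coe] at hx hy
      have hcx : cls x ∈ T := (hUT T x).1 hx
      have hcy : cls y ∈ T := (hUT T y).1 hy
      rintro (h | h)
      · have hh := (hEc _ _).1 h
        exact hT (cls x) hcx (hh ▸ hcy)
      · have hh := (hEc _ _).1 h
        exact hT (cls y) hcy (hh ▸ hcx)
    have := hS.2 _ ⟨fun _ _ => trivial, hstabT⟩
    rw [Set.ncard_coe_finset, hbi] at this
    rw [← hSn]
    exact this
  have hgap : ∀ c, c ∉ JJ → (c - 1 ∈ JJ ∨ c + 1 ∈ JJ) := P17.gap2 hJind hmaxJ hm1 hk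
  obtain ⟨a, b, hab1, hab2, hab3, hab4, hab5, hab6⟩ := P17.alloc hJind hmaxJ hm1 hk
  -- derived facts
  have ham : ∀ c, a c ≤ mm c ∧ b c ≤ mm c := by
    intro c
    by_cases hc : c ∈ JJ
    · have := hab2 c hc; omega
    · have := hab1 c hc; omega
  have habs : ∀ c, a c + b c ≤ mm c := by
    intro c
    by_cases hc : c ∈ JJ
    · exact hab2 c hc
    · exact le_of_eq (hab1 c hc)
  set L : ZMod k → List V := fun c => (Xf c).toList with hL
  have hLlen : ∀ c, (L c).length = mm c := fun c => Finset.length_toList _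
  have hLnd : ∀ c, (L c).Nodup := fun c => Finset.nodup_toList _
  have hLmem : ∀ c v, v ∈ L c ↔ cls v = c := by
    intro c v
    have e : L c = (Xf c).toList := rfl
    rw [e, Finset.mem_toList, hmemXf]
  set τ : ZMod k → ℕ := fun i => if i + 2 ∈ JJ then 0 else a (i+2) with hτ
  set β : ZMod k → ℕ := fun i => if i - 2 ∈ JJ then 0 else b (i-2) with hβ
  have hτle : ∀ i, i ∈ JJ → τ i ≤ a i := by
    intro i hi
    have e : τ i = if i + 2 ∈ JJ then 0 else a (i+2) := rfl
    rw [e]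
    split
    · omega
    · rename_i h
      have h3 := hab3 (i+2) h
      rw [show (i+2) - 1 = i + 1 by ring] at h3
      rw [hab5 i hi]
      exact h3
  have hβle : ∀ i, i ∈ JJ → β i ≤ b i := by
    intro i hi
    have e : β i = if i - 2 ∈ JJ then 0 else b (i-2) := rfl
    rw [e]
    split
    · omega
    · rename_i h
      have h4 := hab4 (i-2) h
      rw [show (i-2) + 1 = i - 1 by ring] at h4
      rw [hab6 i hi]
      exact h4
  have hτm : ∀ i, τ i ≤ mm (i+2) := by
    intro i
    have e : τ i = if i + 2 ∈ JJ then 0 else a (i+2) := rfl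
    rw [e]
    split
    · omega
    · exact (ham (i+2)).1
  have hβm : ∀ i, β i ≤ b (i-2) := by
    intro i
    have e : β i = if i - 2 ∈ JJ then 0 else b (i-2) := rfl
    rw [e]
    split
    · omega
    · exact le_refl _
  set Bseg : ZMod k → List V := fun c => (L c).drop (mm c - b c) with hBseg
  have hBlen : ∀ c, (Bseg c).length = b c := by
    intro c
    have e : Bseg c = (L c).drop (mm c - b c) := rfl
    rw [e, List.length_drop, hLlen]
    have := (ham c).2
    omega
  have hBsub : ∀ c, Bseg c ⊆ L c := fun c => List.drop_subset _ _
  set fwd : ZMod k → List (List V) := fun i =>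
    List.zipWith3 (fun x y z => [x, y, z]) ((L i).take (τ i)) ((L (i+1)).take (τ i))
      ((L (i+2)).take (τ i))
    ++ List.zipWith (fun x y => [x, y]) (((L i).take (a i)).drop (τ i))
      (((L (i+1)).take (a i)).drop (τ i)) with hfwd
  set bwd : ZMod k → List (List V) := fun i =>
    List.zipWith (fun x y => [x, y]) ((Bseg (i-1)).take (b i - β i)) ((Bseg i).take (b i - β i))
    ++ List.zipWith3 (fun x y z => [x, y, z]) ((Bseg (i-2)).take (β i))
      ((Bseg (i-1)).drop (b i - β i)) ((Bseg i).drop (b i - β i)) with hbwd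
  set sng : ZMod k → List (List V) := fun i =>
    (((L i).drop (a i)).take (mm i - a i - b i)).map (fun v => [v]) with hsng
  set blk : ZMod k → List (List V) := fun i => if i ∈ JJ then fwd i ++ bwd i ++ sng i else []
    with hblk
  -- counting
  have grp : ∀ (v : V) (l : List V) (t n : ℕ), t ≤ n →
      (l.take t).count v + ((l.take n).drop t).count v = (l.take n).count v := by
    intro v l t n htn
    conv_rhs => rw [← List.take_append_drop t (l.take n)]
    rw [List.count_append, List.take_take, Nat.min_eq_left htn]
  have hfc : ∀ (v : V) i, i ∈ JJ → ((fwd i).flatten).count v =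
      ((L i).take (a i)).count v + ((L (i+1)).take (a i)).count v
        + ((L (i+2)).take (τ i)).count v := by
    intro v i hi
    have e : fwd i = List.zipWith3 (fun x y z => [x, y, z]) ((L i).take (τ i))
        ((L (i+1)).take (τ i)) ((L (i+2)).take (τ i))
      ++ List.zipWith (fun x y => [x, y]) (((L i).take (a i)).drop (τ i))
        (((L (i+1)).take (a i)).drop (τ i)) := rfl
    have hai : a i = a (i+1) := hab5 i hi
    have l1 : ((L i).take (τ i)).length = τ i := by
      rw [List.length_take, hLlen]
      have h1 := hτle i hi
      have h2 := (ham i).1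
      omega
    have l2 : ((L (i+1)).take (τ i)).length = τ i := by
      rw [List.length_take, hLlen]
      have h1 := hτle i hi
      have h3 := (ham (i+1)).1
      omega
    have l3 : ((L (i+2)).take (τ i)).length = τ i := by
      rw [List.length_take, hLlen]
      have := hτm i
      omega
    have l4 : (((L i).take (a i)).drop (τ i)).length = a i - τ i := by
      rw [List.length_drop, List.length_take, hLlen]
      have := (ham i).1
      omega
    have l5 : (((L (i+1)).take (a i)).drop (τ i)).length = a i - τ i := by
      rw [List.length_drop, List.length_take, hLlen]
      have h3 := (ham (i+1)).1
      omega
    rw [e, List.flatten_append, List.count_append,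
      P17.count_flatten_zip3 _ _ _ (by rw [l1, l2]) (by rw [l2, l3]) v,
      P17.count_flatten_zip2 _ _ (by rw [l4, l5]) v]
    have g1 := grp v (L i) (τ i) (a i) (hτle i hi)
    have g2 := grp v (L (i+1)) (τ i) (a i) (hτle i hi)
    omega
  have hbc : ∀ (v : V) i, i ∈ JJ → ((bwd i).flatten).count v =
      ((Bseg (i-2)).take (β i)).count v + (Bseg (i-1)).count v + (Bseg i).count v := by
    intro v i hi
    have e : bwd i = List.zipWith (fun x y => [x, y]) ((Bseg (i-1)).take (b i - β i))
        ((Bseg i).take (b i - β i))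
      ++ List.zipWith3 (fun x y z => [x, y, z]) ((Bseg (i-2)).take (β i))
        ((Bseg (i-1)).drop (b i - β i)) ((Bseg i).drop (b i - β i)) := rfl
    have hb6 : b i = b (i-1) := hab6 i hi
    have hβb := hβle i hi
    have l1 : ((Bseg (i-1)).take (b i - β i)).length = b i - β i := by
      rw [List.length_take, hBlen]; omega
    have l2 : ((Bseg i).take (b i - β i)).length = b i - β i := by
      rw [List.length_take, hBlen]; omega
    have l3 : ((Bseg (i-2)).take (β i)).length = β i := by
      rw [List.length_take, hBlen]
      have := hβm i
      omega
    have l4 : ((Bseg (i-1)).drop (b i - β i)).length = β i := by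
      rw [List.length_drop, hBlen]; omega
    have l5 : ((Bseg i).drop (b i - β i)).length = β i := by
      rw [List.length_drop, hBlen]; omega
    rw [e, List.flatten_append, List.count_append,
      P17.count_flatten_zip2 _ _ (by rw [l1, l2]) v,
      P17.count_flatten_zip3 _ _ _ (by rw [l3, l4]) (by rw [l4, l5]) v]
    have g1 : ((Bseg (i-1)).take (b i - β i)).count v + ((Bseg (i-1)).drop (b i - β i)).count v
        = (Bseg (i-1)).count v := by
      rw [← List.count_append, List.take_append_drop]
    have g2 : ((Bseg i).take (b i - β i)).count v + ((Bseg i).drop (b i - β i)).count v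
        = (Bseg i).count v := by
      rw [← List.count_append, List.take_append_drop]
    omega
  have hsc : ∀ (v : V) i, ((sng i).flatten).count v
      = (((L i).drop (a i)).take (mm i - a i - b i)).count v := by
    intro v i
    have e : sng i = (((L i).drop (a i)).take (mm i - a i - b i)).map (fun v => [v]) := rfl
    rw [e, P17.flatten_map_singleton]
  have hcount : ∀ v : V,
      (((Finset.univ : Finset (ZMod k)).toList.flatMap blk).flatten).count v = 1 := by
    intro v
    rw [P17.count_flatten_flatMap, Finset.sum_map_toList]
    have hbody : ∀ i, ((blk i).flatten).count v =
        if i ∈ JJ then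
          ((L i).take (a i)).count v + (((L i).drop (a i)).take (mm i - a i - b i)).count v
          + (Bseg i).count v
          + ((L (i+1)).take (a i)).count v + ((L (i+2)).take (τ i)).count v
          + ((Bseg (i-2)).take (β i)).count v + (Bseg (i-1)).count v
        else 0 := by
      intro i
      have e : blk i = if i ∈ JJ then fwd i ++ bwd i ++ sng i else [] := rfl
      rw [e]
      split
      · rename_i hi
        rw [List.flatten_append, List.flatten_append, List.count_append, List.count_append,
          hfc v i hi, hbc v i hi, hsc v i]
        ring
      · simp
    rw [Finset.sum_congr rfl (fun i _ => hbody i), Finset.sum_ite_mem, Finset.univ_inter]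
    rw [Finset.sum_add_distrib, Finset.sum_add_distrib, Finset.sum_add_distrib,
      Finset.sum_add_distrib, Finset.sum_add_distrib, Finset.sum_add_distrib]
    set cc : ZMod k := cls v with hcc
    have hvanish : ∀ (l : List V) (c' : ZMod k), l ⊆ L c' → c' ≠ cc → l.count v = 0 := by
      intro l c' hsub hne
      rw [List.count_eq_zero]
      intro hv
      exact hne (by rw [hcc, ← (hLmem c' v).1 (hsub hv)])
    have hsum_single : ∀ (f : ZMod k → ℕ) (i₀ : ZMod k), (∀ i, i ≠ i₀ → f i = 0) →
        ∑ i ∈ JJ, f i = if i₀ ∈ JJ then f i₀ else 0 := by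
      intro f i₀ h0
      by_cases hi : i₀ ∈ JJ
      · rw [if_pos hi]
        exact Finset.sum_eq_single_of_mem i₀ hi (fun b _ hb => h0 b hb)
      · rw [if_neg hi]
        exact Finset.sum_eq_zero (fun i hiJ => h0 i (fun he => hi (he ▸ hiJ)))
    have e1 : ∑ i ∈ JJ, ((L i).take (a i)).count v
        = if cc ∈ JJ then ((L cc).take (a cc)).count v else 0 :=
      hsum_single _ cc (fun i hne => hvanish _ i (List.take_subset _ _) hne)
    have e2 : ∑ i ∈ JJ, (((L i).drop (a i)).take (mm i - a i - b i)).count v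
        = if cc ∈ JJ then (((L cc).drop (a cc)).take (mm cc - a cc - b cc)).count v else 0 :=
      hsum_single _ cc (fun i hne => hvanish _ i
        (fun x hx => List.drop_subset _ _ (List.take_subset _ _ hx)) hne)
    have e3 : ∑ i ∈ JJ, (Bseg i).count v
        = if cc ∈ JJ then (Bseg cc).count v else 0 :=
      hsum_single _ cc (fun i hne => hvanish _ i (hBsub i) hne)
    have e4 : ∑ i ∈ JJ, ((L (i+1)).take (a i)).count v
        = if cc - 1 ∈ JJ then ((L ((cc-1)+1)).take (a (cc-1))).count v else 0 :=
      hsum_single _ (cc - 1) (fun i hne => hvanish _ (i+1) (List.take_subset _ _)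
        (fun he => hne (by rw [← he]; ring)))
    have e5 : ∑ i ∈ JJ, ((L (i+2)).take (τ i)).count v
        = if cc - 2 ∈ JJ then ((L ((cc-2)+2)).take (τ (cc-2))).count v else 0 :=
      hsum_single _ (cc - 2) (fun i hne => hvanish _ (i+2) (List.take_subset _ _)
        (fun he => hne (by rw [← he]; ring)))
    have e6 : ∑ i ∈ JJ, ((Bseg (i-2)).take (β i)).count v
        = if cc + 2 ∈ JJ then ((Bseg ((cc+2)-2)).take (β (cc+2))).count v else 0 :=
      hsum_single _ (cc + 2) (fun i hne => hvanish _ (i-2)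
        (fun x hx => hBsub _ (List.take_subset _ _ hx))
        (fun he => hne (by rw [← he]; ring)))
    have e7 : ∑ i ∈ JJ, (Bseg (i-1)).count v
        = if cc + 1 ∈ JJ then (Bseg ((cc+1)-1)).count v else 0 :=
      hsum_single _ (cc + 1) (fun i hne => hvanish _ (i-1) (hBsub _)
        (fun he => hne (by rw [← he]; ring)))
    rw [e1, e2, e3, e4, e5, e6, e7]
    have hL1 : (L cc).count v = 1 :=
      List.count_eq_one_of_mem (hLnd cc) ((hLmem cc v).2 hcc.symm)
    have d1 : (L cc).count v = ((L cc).take (mm cc - b cc)).count v + (Bseg cc).count v := by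
      have e : Bseg cc = (L cc).drop (mm cc - b cc) := rfl
      rw [e, ← List.count_append, List.take_append_drop]
    by_cases hcJ : cc ∈ JJ
    · rw [if_pos hcJ, if_pos hcJ, if_pos hcJ,
        if_neg (fun h => hJind (cc-1) h (by rw [sub_add_cancel]; exact hcJ)),
        if_neg (hJind cc hcJ)]
      have h5 : (if cc - 2 ∈ JJ then ((L ((cc-2)+2)).take (τ (cc-2))).count v else 0) = 0 := by
        split
        · have eτ : τ (cc - 2) = 0 := by
            have e0 : τ (cc-2) = if (cc-2)+2 ∈ JJ then 0 else a ((cc-2)+2) := rfl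
            rw [e0, if_pos (by rw [show (cc-2)+2 = cc by ring]; exact hcJ)]
          rw [eτ]
          simp
        · rfl
      have h6 : (if cc + 2 ∈ JJ then ((Bseg ((cc+2)-2)).take (β (cc+2))).count v else 0) = 0 := by
        split
        · have eβ : β (cc + 2) = 0 := by
            have e0 : β (cc+2) = if (cc+2)-2 ∈ JJ then 0 else b ((cc+2)-2) := rfl
            rw [e0, if_pos (by rw [show (cc+2)-2 = cc by ring]; exact hcJ)]
          rw [eβ]
          simp
        · rfl
      rw [h5, h6]
      have d2 : ((L cc).take (a cc)).count v
            + (((L cc).take (mm cc - b cc)).drop (a cc)).count v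
          = ((L cc).take (mm cc - b cc)).count v :=
        grp v _ _ _ (by have := habs cc; omega)
      have d3 : ((L cc).take (mm cc - b cc)).drop (a cc)
          = ((L cc).drop (a cc)).take (mm cc - a cc - b cc) := by
        rw [List.drop_take]
        congr 1
        omega
      rw [d3] at d2
      omega
    · rw [if_neg hcJ, if_neg hcJ, if_neg hcJ]
      have hfwd1 : (if cc - 1 ∈ JJ then ((L ((cc-1)+1)).take (a (cc-1))).count v else 0)
          + (if cc - 2 ∈ JJ then ((L ((cc-2)+2)).take (τ (cc-2))).count v else 0)
          = ((L cc).take (a cc)).count v := by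
        by_cases h1 : cc - 1 ∈ JJ
        · rw [if_pos h1,
            if_neg (fun h2 => hJind (cc-2) h2 (by rw [show (cc-2)+1 = cc - 1 by ring]; exact h1))]
          have eq1 : (cc - 1) + 1 = cc := by ring
          have eq2 : a (cc - 1) = a cc := by
            have h3 := hab5 (cc-1) h1
            rw [eq1] at h3
            exact h3
          rw [eq1, eq2, add_zero]
        · have h2 : cc - 2 ∈ JJ := by
            rcases hgap (cc - 1) h1 with h | h
            · rwa [show cc - 1 - 1 = cc - 2 by ring] at h
            · rw [sub_add_cancel] at h
              exact absurd h hcJ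
          rw [if_neg h1, if_pos h2, zero_add]
          have eq1 : (cc - 2) + 2 = cc := by ring
          have eq2 : τ (cc - 2) = a cc := by
            have e0 : τ (cc-2) = if (cc-2)+2 ∈ JJ then 0 else a ((cc-2)+2) := rfl
            rw [e0, eq1, if_neg hcJ]
          rw [eq1, eq2]
      have hbwd1 : (if cc + 2 ∈ JJ then ((Bseg ((cc+2)-2)).take (β (cc+2))).count v else 0)
          + (if cc + 1 ∈ JJ then (Bseg ((cc+1)-1)).count v else 0)
          = (Bseg cc).count v := by
        by_cases h1 : cc + 1 ∈ JJ
        · rw [if_pos h1,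
            if_neg (fun h2 => hJind (cc+1) h1 (by rwa [show (cc+1)+1 = cc+2 by ring])),
            show (cc+1)-1 = cc by ring, zero_add]
        · have h2 : cc + 2 ∈ JJ := by
            rcases hgap (cc+1) h1 with h | h
            · rw [show cc + 1 - 1 = cc by ring] at h
              exact absurd h hcJ
            · rwa [show cc + 1 + 1 = cc + 2 by ring] at h
          rw [if_pos h2, if_neg h1, add_zero, show (cc+2)-2 = cc by ring]
          have eq2 : β (cc + 2) = b cc := by
            have e0 : β (cc+2) = if (cc+2)-2 ∈ JJ then 0 else b ((cc+2)-2) := rfl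
            rw [e0, show (cc+2)-2 = cc by ring, if_neg hcJ]
          rw [eq2, List.take_of_length_le (le_of_eq (hBlen cc))]
      have eab : mm cc - b cc = a cc := by
        have := hab1 cc hcJ
        omega
      rw [eab] at d1
      omega
  -- path shapes
  have hshape : ∀ p, p ∈ (Finset.univ : Finset (ZMod k)).toList.flatMap blk →
      ∃ i, i ∈ JJ ∧
      ((∃ x y z, p = [x,y,z] ∧ cls x = i ∧ cls y = i+1 ∧ cls z = i+2 ∧ i+2 ∉ JJ) ∨
       (∃ x y, p = [x,y] ∧ cls x = i ∧ cls y = i+1) ∨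
       (∃ x y, p = [x,y] ∧ cls x = i-1 ∧ cls y = i) ∨
       (∃ x y z, p = [x,y,z] ∧ cls x = i-2 ∧ cls y = i-1 ∧ cls z = i ∧ i-2 ∉ JJ) ∨
       (∃ x, p = [x] ∧ cls x = i)) := by
    intro p hp
    rw [List.mem_flatMap] at hp
    obtain ⟨i, _, hpi⟩ := hp
    have e : blk i = if i ∈ JJ then fwd i ++ bwd i ++ sng i else [] := rfl
    rw [e] at hpi
    by_cases hi : i ∈ JJ
    case neg =>
      rw [if_neg hi] at hpi
      simp at hpi
    rw [if_pos hi] at hpi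
    refine ⟨i, hi, ?_⟩
    rw [List.mem_append, List.mem_append] at hpi
    rcases hpi with (hpf | hpb) | hps
    · have e2 : fwd i = List.zipWith3 (fun x y z => [x, y, z]) ((L i).take (τ i))
          ((L (i+1)).take (τ i)) ((L (i+2)).take (τ i))
        ++ List.zipWith (fun x y => [x, y]) (((L i).take (a i)).drop (τ i))
          (((L (i+1)).take (a i)).drop (τ i)) := rfl
      rw [e2, List.mem_append] at hpf
      rcases hpf with h3 | h2
      · obtain ⟨x, y, z, hx, hy, hz, rfl⟩ := P17.mem_zip3 h3
        refine Or.inl ⟨x, y, z, rfl, ?_, ?_, ?_, ?_⟩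
        · exact (hLmem i x).1 (List.take_subset _ _ hx)
        · exact (hLmem _ y).1 (List.take_subset _ _ hy)
        · exact (hLmem _ z).1 (List.take_subset _ _ hz)
        · intro hc2
          have eτ : τ i = 0 := by
            have e0 : τ i = if i + 2 ∈ JJ then 0 else a (i+2) := rfl
            rw [e0, if_pos hc2]
          rw [eτ] at hx
          simp at hx
      · obtain ⟨x, y, hx, hy, rfl⟩ := P17.mem_zip2 h2
        exact Or.inr (Or.inl ⟨x, y, rfl,
          (hLmem i x).1 (List.take_subset _ _ (List.drop_subset _ _ hx)),
          (hLmem _ y).1 (List.take_subset _ _ (List.drop_subset _ _ hy))⟩)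
    · have e2 : bwd i = List.zipWith (fun x y => [x, y]) ((Bseg (i-1)).take (b i - β i))
          ((Bseg i).take (b i - β i))
        ++ List.zipWith3 (fun x y z => [x, y, z]) ((Bseg (i-2)).take (β i))
          ((Bseg (i-1)).drop (b i - β i)) ((Bseg i).drop (b i - β i)) := rfl
      rw [e2, List.mem_append] at hpb
      rcases hpb with h2 | h3
      · obtain ⟨x, y, hx, hy, rfl⟩ := P17.mem_zip2 h2
        exact Or.inr (Or.inr (Or.inl ⟨x, y, rfl,
          (hLmem _ x).1 (hBsub _ (List.take_subset _ _ hx)),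
          (hLmem _ y).1 (hBsub _ (List.take_subset _ _ hy))⟩))
      · obtain ⟨x, y, z, hx, hy, hz, rfl⟩ := P17.mem_zip3 h3
        refine Or.inr (Or.inr (Or.inr (Or.inl ⟨x, y, z, rfl, ?_, ?_, ?_, ?_⟩)))
        · exact (hLmem _ x).1 (hBsub _ (List.take_subset _ _ hx))
        · exact (hLmem _ y).1 (hBsub _ (List.drop_subset _ _ hy))
        · exact (hLmem _ z).1 (hBsub _ (List.drop_subset _ _ hz))
        · intro hc2
          have eβ : β i = 0 := by
            have e0 : β i = if i - 2 ∈ JJ then 0 else b (i-2) := rfl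
            rw [e0, if_pos hc2]
          rw [eβ] at hx
          simp at hx
    · have e2 : sng i = (((L i).drop (a i)).take (mm i - a i - b i)).map (fun v => [v]) := rfl
      rw [e2, List.mem_map] at hps
      obtain ⟨x, hx, rfl⟩ := hps
      exact Or.inr (Or.inr (Or.inr (Or.inr ⟨x, rfl,
        (hLmem i x).1 (List.drop_subset _ _ (List.take_subset _ _ hx))⟩)))
  have hSmem : ∀ (w : V) (j : ZMod k), cls w = j → j ∈ JJ → w ∈ S := by
    intro w j hw hj
    exact (hSfull w).2 (by rw [hw]; exact hj)
  have hSnot : ∀ (w : V) (j : ZMod k), cls w = j → j ∉ JJ → w ∉ S := by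
    intro w j hw hj hwS
    exact hj (by rw [← hw]; exact (hSfull w).1 hwS)
  have him1J : ∀ i, i ∈ JJ → i - 1 ∉ JJ :=
    fun i hi h => hJind (i-1) h (by rw [sub_add_cancel]; exact hi)
  refine ⟨(Finset.univ : Finset (ZMod k)).toList.flatMap blk, ⟨⟨?_, ?_, ?_⟩, ?_⟩, ?_⟩
  · -- paths
    intro p hp
    obtain ⟨i, hi, hsh⟩ := hshape p hp
    rcases hsh with ⟨x,y,z,rfl,hx,hy,hz,h2⟩ | ⟨x,y,rfl,hx,hy⟩ | ⟨x,y,rfl,hx,hy⟩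
      | ⟨x,y,z,rfl,hx,hy,hz,h2⟩ | ⟨x,rfl,hx⟩
    · exact ⟨by simp, List.isChain_cons_cons.2 ⟨(hEc x y).2 (by rw [hy, hx]),
        List.isChain_cons_cons.2 ⟨(hEc y z).2 (by rw [hz, hy]; ring), List.isChain_singleton z⟩⟩⟩
    · exact ⟨by simp, List.isChain_cons_cons.2 ⟨(hEc x y).2 (by rw [hy, hx]), List.isChain_singleton y⟩⟩
    · exact ⟨by simp, List.isChain_cons_cons.2 ⟨(hEc x y).2 (by rw [hy, hx]; ring),
        List.isChain_singleton y⟩⟩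
    · exact ⟨by simp, List.isChain_cons_cons.2 ⟨(hEc x y).2 (by rw [hy, hx]; ring),
        List.isChain_cons_cons.2 ⟨(hEc y z).2 (by rw [hz, hy]; ring), List.isChain_singleton z⟩⟩⟩
    · exact ⟨by simp, List.isChain_singleton x⟩
  · -- nodup
    exact List.nodup_iff_count_le_one.2 (fun v => le_of_eq (hcount v))
  · -- covers univ
    intro v
    simp only [Set.mem_univ, iff_true]
    rw [← List.count_pos_iff]
    rw [hcount v]
    omega
  · -- orthogonal
    intro p hp
    obtain ⟨i, hi, hsh⟩ := hshape p hp
    rcases hsh with ⟨x,y,z,rfl,hx,hy,hz,h2⟩ | ⟨x,y,rfl,hx,hy⟩ | ⟨x,y,rfl,hx,hy⟩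
      | ⟨x,y,z,rfl,hx,hy,hz,h2⟩ | ⟨x,rfl,hx⟩
    · refine ⟨x, ⟨by simp, hSmem x i hx hi⟩, ?_⟩
      rintro w ⟨hwp, hwS⟩
      simp only [List.mem_cons, List.not_mem_nil, or_false] at hwp
      rcases hwp with rfl | rfl | rfl
      · rfl
      · exact absurd hwS (hSnot w _ hy (hJind i hi))
      · exact absurd hwS (hSnot w _ hz h2)
    · refine ⟨x, ⟨by simp, hSmem x i hx hi⟩, ?_⟩
      rintro w ⟨hwp, hwS⟩
      simp only [List.mem_cons, List.not_mem_nil, or_false] at hwp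
      rcases hwp with rfl | rfl
      · rfl
      · exact absurd hwS (hSnot w _ hy (hJind i hi))
    · refine ⟨y, ⟨by simp, hSmem y i hy hi⟩, ?_⟩
      rintro w ⟨hwp, hwS⟩
      simp only [List.mem_cons, List.not_mem_nil, or_false] at hwp
      rcases hwp with rfl | rfl
      · exact absurd hwS (hSnot w _ hx (him1J i hi))
      · rfl
    · refine ⟨z, ⟨by simp, hSmem z i hz hi⟩, ?_⟩
      rintro w ⟨hwp, hwS⟩
      simp only [List.mem_cons, List.not_mem_nil, or_false] at hwp
      rcases hwp with rfl | rfl | rfl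
      · exact absurd hwS (hSnot w _ hx h2)
      · exact absurd hwS (hSnot w _ hy (him1J i hi))
      · rfl
    · refine ⟨x, ⟨by simp, hSmem x i hx hi⟩, ?_⟩
      rintro w ⟨hwp, hwS⟩
      simp only [List.mem_cons, List.not_mem_nil, or_false] at hwp
      rw [hwp]
  · -- BE
    intro p hp v hv hvS
    obtain ⟨i, hi, hsh⟩ := hshape p hp
    rcases hsh with ⟨x,y,z,rfl,hx,hy,hz,h2⟩ | ⟨x,y,rfl,hx,hy⟩ | ⟨x,y,rfl,hx,hy⟩
      | ⟨x,y,z,rfl,hx,hy,hz,h2⟩ | ⟨x,rfl,hx⟩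
    · simp only [List.mem_cons, List.not_mem_nil, or_false] at hv
      rcases hv with rfl | rfl | rfl
      · left; rfl
      · exact absurd hvS (hSnot v _ hy (hJind i hi))
      · exact absurd hvS (hSnot v _ hz h2)
    · simp only [List.mem_cons, List.not_mem_nil, or_false] at hv
      rcases hv with rfl | rfl
      · left; rfl
      · exact absurd hvS (hSnot v _ hy (hJind i hi))
    · simp only [List.mem_cons, List.not_mem_nil, or_false] at hv
      rcases hv with rfl | rfl
      · exact absurd hvS (hSnot v _ hx (him1J i hi))
      · right; rfl
    · simp only [List.mem_cons, List.not_mem_nil, or_false] at hv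
      rcases hv with rfl | rfl | rfl
      · exact absurd hvS (hSnot v _ hx h2)
      · exact absurd hvS (hSnot v _ hy (him1J i hi))
      · right; rfl
    · simp only [List.mem_cons, List.not_mem_nil, or_false] at hv
      rw [hv]
      left; rfl
end

section
/- Every extended cycle D = Q[X₁,...,X_k] satisfies the α-property: for every maximum stable set S of D there exists a path partition of V(D) into directed paths such that each path contains exactly one vertex of S. -/
open Set

namespace StmtAux

variable {V : Type*} {α : Type*} {β : Type*}

def tri : List V → List V → List V → List (List V)
  | _, [], _ => []
  | us, x :: xs, ws => (us.head?.toList ++ x :: ws.head?.toList) :: tri us.tail xs ws.tail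

lemma head?_toList_append_tail (l : List V) : l.head?.toList ++ l.tail = l := by
  cases l <;> simp

lemma tri_flatten_coe : ∀ (us xs ws : List V), us.length ≤ xs.length → ws.length ≤ xs.length →
    ((tri us xs ws).flatten : Multiset V) =
      (us : Multiset V) + (xs : Multiset V) + (ws : Multiset V)
  | us, [], ws, hu, hw => by
    rw [List.length_nil, Nat.le_zero, List.length_eq_zero_iff] at hu hw
    simp [tri, hu, hw]
  | us, x :: xs, ws, hu, hw => by
    have hu' : us.tail.length ≤ xs.length := by
      rcases us with _ | ⟨a, us⟩ <;> simp at hu ⊢ <;> omega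
    have hw' : ws.tail.length ≤ xs.length := by
      rcases ws with _ | ⟨a, ws⟩ <;> simp at hw ⊢ <;> omega
    have IH := tri_flatten_coe us.tail xs ws.tail hu' hw'
    rw [tri, List.flatten_cons, ← Multiset.coe_add, IH]
    conv_rhs => rw [← head?_toList_append_tail us, ← head?_toList_append_tail ws]
    simp only [← Multiset.coe_add, ← Multiset.cons_coe, ← Multiset.singleton_add]
    abel

lemma tri_flatten_perm (us xs ws : List V) (hu : us.length ≤ xs.length)
    (hw : ws.length ≤ xs.length) : (tri us xs ws).flatten.Perm (us ++ xs ++ ws) := by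
  rw [← Multiset.coe_eq_coe, tri_flatten_coe us xs ws hu hw]
  simp only [← Multiset.coe_add]

lemma tri_mem : ∀ {us xs ws : List V} {p : List V}, p ∈ tri us xs ws →
    ∃ (uo wo : Option V) (x : V), x ∈ xs ∧ (∀ u, uo = some u → u ∈ us) ∧
      (∀ w, wo = some w → w ∈ ws) ∧ p = uo.toList ++ x :: wo.toList
  | us, [], ws, p, h => by simp [tri] at h
  | us, x :: xs, ws, p, h => by
    rw [tri, List.mem_cons] at h
    rcases h with h | h
    · exact ⟨us.head?, ws.head?, x, by simp, fun u hu => List.mem_of_mem_head? (by simp [hu]),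
        fun w hw => List.mem_of_mem_head? (by simp [hw]), by simpa using h⟩
    · obtain ⟨uo, wo, y, hy, hu, hw, hp⟩ := tri_mem h
      exact ⟨uo, wo, y, List.mem_cons_of_mem _ hy,
        fun u h' => List.mem_of_mem_tail (hu u h'),
        fun w h' => List.mem_of_mem_tail (hw w h'), hp⟩

lemma flatten_flatMap (f : α → List (List β)) :
    ∀ l : List α, (l.flatMap f).flatten = l.flatMap fun a => (f a).flatten
  | [] => by simp
  | a :: l => by simp [flatten_flatMap f l]

end StmtAux

open Paper in
theorem stmt18 {V : Type*} [Fintype V] (E : V → V → Prop)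
    (k : ℕ) (hk : 2 ≤ k) (X : ZMod k → Set V)
    (hext : ExtCycleOn E k X Set.univ) :
    AlphaPropOn E Set.univ := by
  classical
  haveI : NeZero k := ⟨by omega⟩
  haveI : Fact (1 < k) := ⟨hk⟩
  obtain ⟨hU, hDisj, hNe, hStab, hE⟩ := hext
  have hone : (1 : ZMod k) ≠ 0 := one_ne_zero
  have hEiff : ∀ u v : V, E u v ↔ ∃ i, u ∈ X i ∧ v ∈ X (i + 1) := fun u v =>
    hE u (Set.mem_univ u) v (Set.mem_univ v)
  have classU : ∀ v : V, ∃ i, v ∈ X i := by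
    intro v
    have hv : v ∈ ⋃ i, X i := by rw [hU]; exact Set.mem_univ v
    simpa using hv
  have classUniq : ∀ {v : V} {a b : ZMod k}, v ∈ X a → v ∈ X b → a = b := by
    intro v a b ha hb
    by_contra hne
    exact Set.disjoint_left.1 (hDisj a b hne) ha hb
  have hEdge : ∀ {a : ZMod k} {u v : V}, u ∈ X a → v ∈ X (a + 1) → E u v :=
    fun {a u v} hu hv => (hEiff u v).2 ⟨a, hu, hv⟩
  intro S hS
  obtain ⟨⟨-, hSstab⟩, hSmax⟩ := hS
  set I : Set (ZMod k) := {i | (S ∩ X i).Nonempty} with hIdef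
  have hmax : ∀ T : Set V, Stable E T → T.ncard ≤ S.ncard := fun T hT =>
    hSmax T ⟨Set.subset_univ _, hT⟩
  have hSnotin : ∀ {j : ZMod k} {v : V}, j ∉ I → v ∈ X j → v ∉ S := fun {j v} hj hv hvS =>
    hj ⟨v, hvS, hv⟩
  have hIind : ∀ i : ZMod k, i ∈ I → i + 1 ∉ I := by
    rintro i ⟨s, hsS, hsX⟩ ⟨t, htS, htX⟩
    have hst : s ≠ t := by
      rintro rfl
      exact hone (left_eq_add.1 (classUniq hsX htX))
    exact hSstab s hsS t htS hst (Or.inl (hEdge hsX htX))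
  have hsub1 : ∀ a : ZMod k, a - 1 + 1 = a := fun a => sub_add_cancel a 1
  have hadd1 : ∀ a : ZMod k, a + 1 - 1 = a := fun a => add_sub_cancel_right a 1
  have hIind' : ∀ i : ZMod k, i ∈ I → i - 1 ∉ I := by
    intro i hi hmem
    exact hIind (i - 1) hmem (by rw [hsub1]; exact hi)
  have hkey : ∀ {i : ZMod k}, i ∈ I → ∀ u ∈ S, ∀ v ∈ X i, ¬ Adj E u v := by
    intro i hi u huS v hvX hadj
    rcases hadj with h | h
    · obtain ⟨b, hub, hvb⟩ := (hEiff u v).1 h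
      have hbI : b ∈ I := ⟨u, huS, hub⟩
      have hbi : b + 1 = i := classUniq hvb hvX
      exact hIind b hbI (by rw [hbi]; exact hi)
    · obtain ⟨b, hvb, hub⟩ := (hEiff v u).1 h
      have hbi : b = i := classUniq hvb hvX
      subst hbi
      exact hIind b hi ⟨u, huS, hub⟩
  have hXsubS : ∀ {i : ZMod k}, i ∈ I → X i ⊆ S := by
    intro i hi
    have hstab2 : Stable E (S ∪ X i) := by
      intro u hu v hv huv hadj
      rcases hu with hu | hu <;> rcases hv with hv | hv
      · exact hSstab u hu v hv huv hadj
      · exact hkey hi u hu v hv hadj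
      · exact hkey hi v hv u hu (Or.symm hadj)
      · exact hStab i u hu v hv huv hadj
    have hle := hmax _ hstab2
    have hun : S ∪ X i = S ∪ (X i \ S) := by rw [Set.union_diff_self]
    rw [hun, Set.ncard_union_eq disjoint_sdiff_self_right (Set.toFinite _) (Set.toFinite _)]
      at hle
    have h0 : (X i \ S).ncard = 0 := by omega
    have hdiff : X i \ S = ∅ := (Set.ncard_eq_zero (Set.toFinite _)).1 h0
    exact Set.diff_eq_empty.1 hdiff
  -- Finset versions
  set Xf : ZMod k → Finset V := fun i => (X i).toFinset with hXfdef
  have hmemXf : ∀ {i : ZMod k} {v : V}, v ∈ Xf i ↔ v ∈ X i := fun {i v} => Set.mem_toFinset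
  set If : Finset (ZMod k) := Finset.univ.filter (· ∈ I) with hIfdef
  have hmemIf : ∀ {i : ZMod k}, i ∈ If ↔ i ∈ I := fun {i} => by
    rw [hIfdef]; simp
  have hXfdisj : ∀ a b : ZMod k, a ≠ b → Disjoint (Xf a) (Xf b) := by
    intro a b hab
    rw [Finset.disjoint_left]
    intro v hva hvb
    exact hab (classUniq (hmemXf.1 hva) (hmemXf.1 hvb))
  have hSeq : S = ↑(If.biUnion Xf) := by
    ext v
    constructor
    · intro hvS
      obtain ⟨i, hvX⟩ := classU v
      have hiI : i ∈ I := ⟨v, hvS, hvX⟩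
      exact Finset.mem_coe.2 (Finset.mem_biUnion.2 ⟨i, hmemIf.2 hiI, hmemXf.2 hvX⟩)
    · intro hv
      obtain ⟨i, hiIf, hvXf⟩ := Finset.mem_biUnion.1 (Finset.mem_coe.1 hv)
      exact hXsubS (hmemIf.1 hiIf) (hmemXf.1 hvXf)
  have hScard : S.ncard = ∑ i ∈ If, (Xf i).card := by
    rw [hSeq, Set.ncard_coe_finset]
    exact Finset.card_biUnion fun a _ b _ hab => hXfdisj a b hab
  have exch : ∀ J : Finset (ZMod k), (∀ a ∈ J, a + 1 ∉ J) →
      ∑ a ∈ J, (Xf a).card ≤ ∑ i ∈ If, (Xf i).card := by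
    intro J hJ
    have hstabJ : Stable E ↑(J.biUnion Xf) := by
      intro u hu v hv huv hadj
      obtain ⟨a, haJ, hua⟩ := Finset.mem_biUnion.1 (Finset.mem_coe.1 hu)
      obtain ⟨b, hbJ, hvb⟩ := Finset.mem_biUnion.1 (Finset.mem_coe.1 hv)
      have hua' := hmemXf.1 hua
      have hvb' := hmemXf.1 hvb
      rcases hadj with h | h
      · obtain ⟨c, huc, hvc⟩ := (hEiff u v).1 h
        have h1 : c = a := classUniq huc hua'
        subst h1
        have h2 : c + 1 = b := classUniq hvc hvb'
        exact hJ c haJ (by rw [h2]; exact hbJ)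
      · obtain ⟨c, hvc, huc⟩ := (hEiff v u).1 h
        have h1 : c = b := classUniq hvc hvb'
        subst h1
        have h2 : c + 1 = a := classUniq huc hua'
        exact hJ c hbJ (by rw [h2]; exact haJ)
    have hle := hmax _ hstabJ
    rw [Set.ncard_coe_finset,
      Finset.card_biUnion fun a _ b _ hab => hXfdisj a b hab, hScard] at hle
    exact hle
  have hnfpos : ∀ i : ZMod k, 0 < (Xf i).card := by
    intro i
    obtain ⟨v, hv⟩ := hNe i
    exact Finset.card_pos.2 ⟨v, hmemXf.2 hv⟩
  have hgap : ∀ j : ZMod k, j ∉ I → (j - 1 ∈ I ∨ j + 1 ∈ I) := by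
    intro j hj
    by_contra hcon
    push_neg at hcon
    obtain ⟨h1, h2⟩ := hcon
    have hjIf : j ∉ If := fun h => hj (hmemIf.1 h)
    have hind : ∀ a ∈ insert j If, a + 1 ∉ insert j If := by
      intro a ha hmem
      rcases Finset.mem_insert.1 hmem with h | h
      · rcases Finset.mem_insert.1 ha with rfl | ha'
        · exact hone (left_eq_add.1 h.symm)
        · exact h1 (by rw [← h, hadd1]; exact hmemIf.1 ha')
      · rcases Finset.mem_insert.1 ha with rfl | ha'
        · exact h2 (hmemIf.1 h)
        · exact hIind a (hmemIf.1 ha') (hmemIf.1 h)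
    have hle := exch _ hind
    rw [Finset.sum_insert hjIf] at hle
    have hpos := hnfpos j
    omega
  have hineq2 : ∀ j : ZMod k, j ∉ I → j - 1 ∈ I → j + 1 ∉ I →
      (Xf j).card ≤ (Xf (j - 1)).card := by
    intro j hj h1 h2
    have hjIf : j ∉ If.erase (j - 1) := fun h => hj (hmemIf.1 (Finset.mem_of_mem_erase h))
    have hind : ∀ a ∈ insert j (If.erase (j - 1)), a + 1 ∉ insert j (If.erase (j - 1)) := by
      intro a ha hmem
      rcases Finset.mem_insert.1 hmem with h | h
      · rcases Finset.mem_insert.1 ha with rfl | ha'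
        · exact hone (left_eq_add.1 h.symm)
        · exact (Finset.mem_erase.1 ha').1 (by rw [← h, hadd1])
      · rcases Finset.mem_insert.1 ha with rfl | ha'
        · exact h2 (hmemIf.1 (Finset.mem_of_mem_erase h))
        · exact hIind a (hmemIf.1 (Finset.mem_of_mem_erase ha'))
            (hmemIf.1 (Finset.mem_of_mem_erase h))
    have hle := exch _ hind
    rw [Finset.sum_insert hjIf] at hle
    have hsum : ∑ i ∈ If.erase (j - 1), (Xf i).card + (Xf (j - 1)).card
        = ∑ i ∈ If, (Xf i).card :=
      Finset.sum_erase_add If (fun i => (Xf i).card) (hmemIf.2 h1)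
    omega
  have hineq3 : ∀ j : ZMod k, j ∉ I → j - 1 ∉ I → j + 1 ∈ I →
      (Xf j).card ≤ (Xf (j + 1)).card := by
    intro j hj h1 h2
    have hjIf : j ∉ If.erase (j + 1) := fun h => hj (hmemIf.1 (Finset.mem_of_mem_erase h))
    have hind : ∀ a ∈ insert j (If.erase (j + 1)), a + 1 ∉ insert j (If.erase (j + 1)) := by
      intro a ha hmem
      rcases Finset.mem_insert.1 hmem with h | h
      · rcases Finset.mem_insert.1 ha with rfl | ha'
        · exact hone (left_eq_add.1 h.symm)
        · exact h1 (by rw [← h, hadd1]; exact hmemIf.1 (Finset.mem_of_mem_erase ha'))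
      · rcases Finset.mem_insert.1 ha with rfl | ha'
        · exact (Finset.mem_erase.1 h).1 rfl
        · exact hIind a (hmemIf.1 (Finset.mem_of_mem_erase ha'))
            (hmemIf.1 (Finset.mem_of_mem_erase h))
    have hle := exch _ hind
    rw [Finset.sum_insert hjIf] at hle
    have hsum : ∑ i ∈ If.erase (j + 1), (Xf i).card + (Xf (j + 1)).card
        = ∑ i ∈ If, (Xf i).card :=
      Finset.sum_erase_add If (fun i => (Xf i).card) (hmemIf.2 h2)
    omega
  have hineq1 : ∀ j : ZMod k, j ∉ I → j - 1 ∈ I → j + 1 ∈ I →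
      (Xf j).card ≤ (Xf (j - 1)).card + (Xf (j + 1)).card := by
    intro j hj h1 h2
    have heesub : (If.erase (j - 1)).erase (j + 1) ⊆ If :=
      (Finset.erase_subset _ _).trans (Finset.erase_subset _ _)
    have hjee : j ∉ (If.erase (j - 1)).erase (j + 1) := fun h => hj (hmemIf.1 (heesub h))
    have hind : ∀ a ∈ insert j ((If.erase (j - 1)).erase (j + 1)),
        a + 1 ∉ insert j ((If.erase (j - 1)).erase (j + 1)) := by
      intro a ha hmem
      rcases Finset.mem_insert.1 hmem with h | h
      · rcases Finset.mem_insert.1 ha with rfl | ha'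
        · exact hone (left_eq_add.1 h.symm)
        · exact (Finset.mem_erase.1 (Finset.mem_of_mem_erase ha')).1 (by rw [← h, hadd1])
      · rcases Finset.mem_insert.1 ha with rfl | ha'
        · exact (Finset.mem_erase.1 h).1 rfl
        · exact hIind a (hmemIf.1 (heesub ha')) (hmemIf.1 (heesub h))
    have hle := exch _ hind
    rw [Finset.sum_insert hjee] at hle
    have e1 : ∑ i ∈ If.erase (j - 1), (Xf i).card + (Xf (j - 1)).card
        = ∑ i ∈ If, (Xf i).card :=
      Finset.sum_erase_add If (fun i => (Xf i).card) (hmemIf.2 h1)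
    have e2 : ∑ i ∈ If.erase (j - 1), (Xf i).card
        ≤ ∑ i ∈ (If.erase (j - 1)).erase (j + 1), (Xf i).card + (Xf (j + 1)).card := by
      by_cases hmem : j + 1 ∈ If.erase (j - 1)
      · have he : ∑ i ∈ (If.erase (j - 1)).erase (j + 1), (Xf i).card + (Xf (j + 1)).card
            = ∑ i ∈ If.erase (j - 1), (Xf i).card :=
          Finset.sum_erase_add (If.erase (j - 1)) (fun i => (Xf i).card) hmem
        omega
      · rw [Finset.erase_eq_of_notMem hmem]
        omega
    omega
  -- the splitting of non-I classes
  have hsplit : ∀ j : ZMod k, ∃ Aj Bj : Finset V,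
      (∀ v ∈ Aj, v ∈ X j) ∧ (∀ v ∈ Bj, v ∈ X j) ∧ Disjoint Aj Bj ∧
      Aj.card ≤ (Xf (j + 1)).card ∧ Bj.card ≤ (Xf (j - 1)).card ∧
      (j ∉ I → ∀ v ∈ X j, v ∈ Aj ∨ v ∈ Bj) ∧
      (Aj.Nonempty → j + 1 ∈ I) ∧ (Bj.Nonempty → j - 1 ∈ I) := by
    intro j
    by_cases hj : j ∈ I
    · refine ⟨∅, ∅, by simp, by simp, by simp, by simp, by simp,
        fun h => absurd hj h, ?_, ?_⟩
      · intro h; exact absurd h (by simp)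
      · intro h; exact absurd h (by simp)
    · by_cases h1 : j - 1 ∈ I <;> by_cases h2 : j + 1 ∈ I
      · -- both neighbours in I
        have hmin : min (Xf j).card (Xf (j - 1)).card ≤ (Xf j).card := min_le_left _ _
        obtain ⟨Bj, hBsub, hBcard⟩ := Finset.exists_subset_card_eq hmin
        refine ⟨Xf j \ Bj, Bj, ?_, ?_, Finset.sdiff_disjoint, ?_, ?_, ?_, fun _ => h2,
          fun _ => h1⟩
        · intro v hv; exact hmemXf.1 (Finset.mem_sdiff.1 hv).1
        · intro v hv; exact hmemXf.1 (hBsub hv)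
        · have hcard : (Xf j \ Bj).card = (Xf j).card - Bj.card := Finset.card_sdiff_of_subset hBsub
          have hi1 := hineq1 j hj h1 h2
          rw [hcard, hBcard]
          omega
        · rw [hBcard]; exact min_le_right _ _
        · intro _ v hv
          by_cases hvB : v ∈ Bj
          · exact Or.inr hvB
          · exact Or.inl (Finset.mem_sdiff.2 ⟨hmemXf.2 hv, hvB⟩)
      · refine ⟨∅, Xf j, by simp, ?_, by simp, by simp, ?_,
          fun _ v hv => Or.inr (hmemXf.2 hv), ?_, fun _ => h1⟩
        · intro v hv; exact hmemXf.1 hv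
        · exact hineq2 j hj h1 h2
        · intro h; exact absurd h (by simp)
      · refine ⟨Xf j, ∅, ?_, by simp, by simp, ?_, by simp,
          fun _ v hv => Or.inl (hmemXf.2 hv), fun _ => h2, ?_⟩
        · intro v hv; exact hmemXf.1 hv
        · exact hineq3 j hj h1 h2
        · intro h; exact absurd h (by simp)
      · rcases hgap j hj with h | h
        · exact absurd h h1
        · exact absurd h h2
  choose A B hA hB hABdisj hcardA hcardB hcover hne1 hne2 using hsplit
  -- the lists
  set us : ZMod k → List V := fun i => (A (i - 1)).toList with husdef
  set xsl : ZMod k → List V := fun i => (Xf i).toList with hxsdef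
  set ws : ZMod k → List V := fun i => (B (i + 1)).toList with hwsdef
  have hlenu : ∀ i : ZMod k, (us i).length ≤ (xsl i).length := by
    intro i
    have h := hcardA (i - 1)
    rw [hsub1] at h
    simpa [husdef, hxsdef, Finset.length_toList] using h
  have hlenw : ∀ i : ZMod k, (ws i).length ≤ (xsl i).length := by
    intro i
    have h := hcardB (i + 1)
    rw [hadd1] at h
    simpa [hwsdef, hxsdef, Finset.length_toList] using h
  have hmem_paths : ∀ i : ZMod k, ∀ p ∈ StmtAux.tri (us i) (xsl i) (ws i),
      ∃ (uo wo : Option V) (x : V),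
      x ∈ X i ∧ (∀ u, uo = some u → u ∈ A (i - 1)) ∧ (∀ w, wo = some w → w ∈ B (i + 1)) ∧
      p = uo.toList ++ x :: wo.toList := by
    intro i p hp
    obtain ⟨uo, wo, x, hx, hu, hw, hp'⟩ := StmtAux.tri_mem hp
    refine ⟨uo, wo, x, ?_, fun u h => ?_, fun w h => ?_, hp'⟩
    · rw [hxsdef] at hx
      exact hmemXf.1 (Finset.mem_toList.1 hx)
    · have := hu u h
      rw [husdef] at this
      exact Finset.mem_toList.1 this
    · have := hw w h
      rw [hwsdef] at this
      exact Finset.mem_toList.1 this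
  have hblock : ∀ (c : ZMod k) (v : V), v ∈ us c ++ xsl c ++ ws c →
      v ∈ A (c - 1) ∨ v ∈ Xf c ∨ v ∈ B (c + 1) := by
    intro c v hv
    rcases List.mem_append.1 hv with hv' | hv'
    · rcases List.mem_append.1 hv' with h | h
      · rw [husdef] at h; exact Or.inl (Finset.mem_toList.1 h)
      · rw [hxsdef] at h; exact Or.inr (Or.inl (Finset.mem_toList.1 h))
    · rw [hwsdef] at hv'; exact Or.inr (Or.inr (Finset.mem_toList.1 hv'))
  have hblock1 : ∀ (c : ZMod k) (v : V), v ∈ A (c - 1) → v ∈ us c ++ xsl c ++ ws c := by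
    intro c v h
    refine List.mem_append.2 (Or.inl (List.mem_append.2 (Or.inl ?_)))
    rw [husdef]; exact Finset.mem_toList.2 h
  have hblock2 : ∀ (c : ZMod k) (v : V), v ∈ Xf c → v ∈ us c ++ xsl c ++ ws c := by
    intro c v h
    refine List.mem_append.2 (Or.inl (List.mem_append.2 (Or.inr ?_)))
    rw [hxsdef]; exact Finset.mem_toList.2 h
  have hblock3 : ∀ (c : ZMod k) (v : V), v ∈ B (c + 1) → v ∈ us c ++ xsl c ++ ws c := by
    intro c v h
    refine List.mem_append.2 (Or.inr ?_)
    rw [hwsdef]; exact Finset.mem_toList.2 h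
  refine ⟨If.toList.flatMap (fun i => StmtAux.tri (us i) (xsl i) (ws i)), ⟨?_, ?_, ?_⟩, ?_⟩
  · -- every member is a path
    intro p hp
    obtain ⟨i, hi, hp'⟩ := List.mem_flatMap.1 hp
    obtain ⟨uo, wo, x, hx, hu, hw, rfl⟩ := hmem_paths i p hp'
    have hEux : ∀ u, uo = some u → E u x := by
      intro u h
      exact hEdge (hA _ _ (hu u h)) (by rw [hsub1]; exact hx)
    have hExw : ∀ w, wo = some w → E x w := by
      intro w h
      exact hEdge hx (hB _ _ (hw w h))
    constructor
    · rcases uo with _ | u <;> simp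
    · rcases uo with _ | u <;> rcases wo with _ | w
      · exact List.isChain_singleton x
      · exact List.isChain_pair.2 (hExw w rfl)
      · exact List.isChain_pair.2 (hEux u rfl)
      · refine List.isChain_cons_cons.2 ⟨hEux u rfl, ?_⟩
        simpa using hExw w rfl
  · -- nodup
    rw [StmtAux.flatten_flatMap, List.nodup_flatMap]
    constructor
    · intro i hi
      have hperm := StmtAux.tri_flatten_perm (us i) (xsl i) (ws i) (hlenu i) (hlenw i)
      rw [hperm.nodup_iff]
      rw [List.nodup_append, List.nodup_append]
      refine ⟨⟨?_, ?_, ?_⟩, ?_, ?_⟩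
      · rw [husdef]; exact Finset.nodup_toList _
      · rw [hxsdef]; exact Finset.nodup_toList _
      · intro v hvu _ hvx rfl
        rw [husdef] at hvu
        rw [hxsdef] at hvx
        have hv1 : v ∈ X (i - 1) := hA _ _ (Finset.mem_toList.1 hvu)
        have hv2 : v ∈ X i := hmemXf.1 (Finset.mem_toList.1 hvx)
        exact hone (sub_eq_self.1 (classUniq hv1 hv2))
      · rw [hwsdef]; exact Finset.nodup_toList _
      · intro v hv _ hvw rfl
        rw [hwsdef] at hvw
        have h3 : v ∈ B (i + 1) := Finset.mem_toList.1 hvw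
        have h3' : v ∈ X (i + 1) := hB _ _ h3
        rcases List.mem_append.1 hv with hvu | hvx
        · rw [husdef] at hvu
          have hv1 : v ∈ A (i - 1) := Finset.mem_toList.1 hvu
          have hv1' : v ∈ X (i - 1) := hA _ _ hv1
          have heq : i - 1 = i + 1 := classUniq hv1' h3'
          exact Finset.disjoint_left.1 (hABdisj (i - 1)) hv1 (by rw [heq]; exact h3)
        · rw [hxsdef] at hvx
          have hv2 : v ∈ X i := hmemXf.1 (Finset.mem_toList.1 hvx)
          have heq : i = i + 1 := classUniq hv2 h3'
          exact hone (left_eq_add.1 heq)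
    · refine (Finset.nodup_toList If).pairwise_of_forall_ne ?_
      intro a ha b hb hab
      have haI : a ∈ I := hmemIf.1 (Finset.mem_toList.1 ha)
      have hbI : b ∈ I := hmemIf.1 (Finset.mem_toList.1 hb)
      simp only [Function.onFun]
      intro v hva hvb
      have hva' := (StmtAux.tri_flatten_perm (us a) (xsl a) (ws a)
        (hlenu a) (hlenw a)).mem_iff.1 hva
      have hvb' := (StmtAux.tri_flatten_perm (us b) (xsl b) (ws b)
        (hlenu b) (hlenw b)).mem_iff.1 hvb
      rcases hblock a v hva' with h | h | h <;> rcases hblock b v hvb' with g | g | g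
      · exact hab (sub_left_inj.1 (classUniq (hA _ _ h) (hA _ _ g)))
      · have heq : a - 1 = b := classUniq (hA _ _ h) (hmemXf.1 g)
        have hba : b + 1 = a := by rw [← heq, hsub1]
        exact hIind b hbI (by rw [hba]; exact haI)
      · have heq : a - 1 = b + 1 := classUniq (hA _ _ h) (hB _ _ g)
        exact Finset.disjoint_left.1 (hABdisj (b + 1)) (by rw [← heq]; exact h) g
      · have heq : b - 1 = a := classUniq (hA _ _ g) (hmemXf.1 h)
        have hba : a + 1 = b := by rw [← heq, hsub1]
        exact hIind a haI (by rw [hba]; exact hbI)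
      · exact hab (classUniq (hmemXf.1 h) (hmemXf.1 g))
      · have heq : a = b + 1 := classUniq (hmemXf.1 h) (hB _ _ g)
        exact hIind b hbI (by rw [← heq]; exact haI)
      · have heq : b - 1 = a + 1 := classUniq (hA _ _ g) (hB _ _ h)
        exact Finset.disjoint_left.1 (hABdisj (a + 1)) (by rw [← heq]; exact g) h
      · have heq : b = a + 1 := classUniq (hmemXf.1 g) (hB _ _ h)
        exact hIind a haI (by rw [← heq]; exact hbI)
      · exact hab ((add_left_inj 1).1 (classUniq (hB _ _ h) (hB _ _ g)))
  · -- coverage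
    intro v
    constructor
    · intro _; exact Set.mem_univ v
    · intro _
      rw [StmtAux.flatten_flatMap, List.mem_flatMap]
      obtain ⟨j, hvX⟩ := classU v
      by_cases hj : j ∈ I
      · refine ⟨j, Finset.mem_toList.2 (hmemIf.2 hj), ?_⟩
        exact (StmtAux.tri_flatten_perm (us j) (xsl j) (ws j)
          (hlenu j) (hlenw j)).mem_iff.2 (hblock2 j v (hmemXf.2 hvX))
      · rcases hcover j hj v hvX with h | h
        · have hj1 : j + 1 ∈ I := hne1 j ⟨v, h⟩
          refine ⟨j + 1, Finset.mem_toList.2 (hmemIf.2 hj1), ?_⟩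
          refine (StmtAux.tri_flatten_perm (us (j + 1)) (xsl (j + 1)) (ws (j + 1))
            (hlenu _) (hlenw _)).mem_iff.2 (hblock1 (j + 1) v ?_)
          rw [hadd1]; exact h
        · have hj1 : j - 1 ∈ I := hne2 j ⟨v, h⟩
          refine ⟨j - 1, Finset.mem_toList.2 (hmemIf.2 hj1), ?_⟩
          refine (StmtAux.tri_flatten_perm (us (j - 1)) (xsl (j - 1)) (ws (j - 1))
            (hlenu _) (hlenw _)).mem_iff.2 (hblock3 (j - 1) v ?_)
          rw [hsub1]; exact h
  · -- orthogonality
    intro p hp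
    obtain ⟨i, hi, hp'⟩ := List.mem_flatMap.1 hp
    have hiI : i ∈ I := hmemIf.1 (Finset.mem_toList.1 hi)
    obtain ⟨uo, wo, x, hx, hu, hw, rfl⟩ := hmem_paths i p hp'
    refine ⟨x, ⟨List.mem_append.2 (Or.inr (List.mem_cons_self)), hXsubS hiI hx⟩, ?_⟩
    rintro y ⟨hyp, hyS⟩
    rcases List.mem_append.1 hyp with hyu | hyx
    · rcases uo with _ | u
      · simp at hyu
      · have hyu' : y = u := by simpa using hyu
        subst hyu'
        exact absurd hyS (hSnotin (hIind' i hiI) (hA _ _ (hu _ rfl)))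
    · rcases List.mem_cons.1 hyx with rfl | hyw
      · rfl
      · rcases wo with _ | w
        · simp at hyw
        · have hyw' : y = w := by simpa using hyw
          subst hyw'
          exact absurd hyS (hSnotin (hIind i hiI) (hB _ _ (hw _ rfl)))
end

section
/- Let D be a digraph whose vertex set can be partitioned into subsets V₁, ..., V_k (k ≥ 2) such that each induced subdigraph D[V_i] satisfies the BE-property and α(D) = Σ_{i=1}^{k} α(D[V_i]). Then D satisfies the BE-property. -/
open Set

open Paper in
private lemma flatten_flatMap' {α β : Type*} (l : List α) (f : α → List (List β)) :
    (l.flatMap f).flatten = l.flatMap (fun a => (f a).flatten) := by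
  induction l with
  | nil => simp
  | cons a l ih => simp [List.flatMap_cons, List.flatten_append, ih]

open Paper in
theorem stmt19 {V : Type*} [Fintype V] (E : V → V → Prop)
    (k : ℕ) (hk : 2 ≤ k) (W : Fin k → Set V)
    (hdisj : ∀ i j, i ≠ j → Disjoint (W i) (W j))
    (hcov : (⋃ i, W i) = Set.univ)
    (hBE : ∀ i, BEPropOn E (W i))
    (halpha : alphaOn E Set.univ = ∑ i, alphaOn E (W i)) :
    BEPropOn E Set.univ := by
  classical
  intro S hS
  obtain ⟨⟨hSsub, hSst⟩, hSmax⟩ := hS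
  have hbdd : ∀ (U : Set V), BddAbove {n | ∃ T, StableOn E U T ∧ T.ncard = n} := by
    intro U
    refine ⟨Nat.card V, ?_⟩
    rintro n ⟨T, _, rfl⟩
    simpa [Set.ncard_univ] using Set.ncard_le_ncard (Set.subset_univ T) Set.finite_univ
  have halpha_univ : alphaOn E Set.univ = S.ncard := by
    apply le_antisymm
    · exact csSup_le ⟨S.ncard, S, ⟨hSsub, hSst⟩, rfl⟩
        (by rintro n ⟨T, hT, rfl⟩; exact hSmax T hT)
    · exact le_csSup (hbdd _) ⟨S, ⟨hSsub, hSst⟩, rfl⟩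
  set Si : Fin k → Set V := fun i => S ∩ W i with hSi
  have hSist : ∀ i, StableOn E (W i) (Si i) := by
    intro i
    refine ⟨Set.inter_subset_right, ?_⟩
    intro u hu v hv huv
    exact hSst u hu.1 v hv.1 huv
  have hSile : ∀ i, (Si i).ncard ≤ alphaOn E (W i) := fun i =>
    le_csSup (hbdd _) ⟨Si i, hSist i, rfl⟩
  have hsum : ∑ i, (Si i).ncard = S.ncard := by
    have hdisjF : ∀ i ∈ (Finset.univ : Finset (Fin k)), ∀ j ∈ (Finset.univ : Finset (Fin k)),
        i ≠ j → Disjoint (Si i).toFinset (Si j).toFinset := by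
      intro i _ j _ hij
      rw [Set.disjoint_toFinset]
      exact ((hdisj i j hij).mono Set.inter_subset_right Set.inter_subset_right)
    calc ∑ i, (Si i).ncard = ∑ i, (Si i).toFinset.card := by
          simp [Set.ncard_eq_toFinset_card']
      _ = (Finset.univ.biUnion fun i => (Si i).toFinset).card :=
          (Finset.card_biUnion hdisjF).symm
      _ = S.toFinset.card := by
          congr 1
          ext v
          simp only [Finset.mem_biUnion, Finset.mem_univ, Set.mem_toFinset, true_and, hSi,
            Set.mem_inter_iff]
          constructor
          · rintro ⟨i, hv, _⟩; exact hv
          · intro hv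
            have : v ∈ ⋃ i, W i := by rw [hcov]; trivial
            obtain ⟨i, hi⟩ := Set.mem_iUnion.1 this
            exact ⟨i, hv, hi⟩
      _ = S.ncard := (Set.ncard_eq_toFinset_card' S).symm
  have heq : ∀ i, (Si i).ncard = alphaOn E (W i) := by
    have h := (Finset.sum_eq_sum_iff_of_le (fun i (_ : i ∈ Finset.univ) => hSile i)).1
      (by rw [hsum, ← halpha_univ, halpha])
    exact fun i => h i (Finset.mem_univ i)
  have hmax : ∀ i, MaxStableOn E (W i) (Si i) := by
    intro i
    refine ⟨hSist i, fun T hT => ?_⟩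
    rw [heq i]
    exact le_csSup (hbdd _) ⟨T, hT, rfl⟩
  choose P hP using fun i => hBE i (Si i) (hmax i)
  refine ⟨(List.finRange k).flatMap P, ?_⟩
  have hmemP : ∀ p, p ∈ (List.finRange k).flatMap P ↔ ∃ i, p ∈ P i := by
    intro p
    simp [List.mem_flatMap, List.mem_finRange]
  have hflat : ((List.finRange k).flatMap P).flatten
      = (List.finRange k).flatMap (fun i => (P i).flatten) := flatten_flatMap' _ _
  have hPimem : ∀ i v, v ∈ (P i).flatten ↔ v ∈ W i := fun i => (hP i).1.1.2.2
  have hmemS : ∀ i p, p ∈ P i → ∀ v ∈ p, v ∈ S → v ∈ Si i := by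
    intro i p hp v hv hvS
    exact ⟨hvS, (hPimem i v).1 (List.mem_flatten.2 ⟨p, hp, hv⟩)⟩
  refine ⟨⟨⟨?_, ?_, ?_⟩, ?_⟩, ?_⟩
  · intro p hp
    obtain ⟨i, hi⟩ := (hmemP p).1 hp
    exact (hP i).1.1.1 p hi
  · rw [hflat]
    rw [List.nodup_flatMap]
    refine ⟨fun i _ => (hP i).1.1.2.1, ?_⟩
    refine (List.nodup_finRange k).imp ?_
    intro i j hij a ha hb
    exact Set.disjoint_left.1 (hdisj i j hij) ((hPimem i a).1 ha) ((hPimem j a).1 hb)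
  · intro v
    simp only [Set.mem_univ, iff_true, hflat, List.mem_flatMap, List.mem_finRange, true_and]
    have : v ∈ ⋃ i, W i := by rw [hcov]; trivial
    obtain ⟨i, hi⟩ := Set.mem_iUnion.1 this
    exact ⟨i, (hPimem i v).2 hi⟩
  · intro p hp
    obtain ⟨i, hi⟩ := (hmemP p).1 hp
    obtain ⟨v, ⟨hvp, hvS⟩, huniq⟩ := (hP i).1.2 p hi
    refine ⟨v, ⟨hvp, hvS.1⟩, ?_⟩
    rintro w ⟨hwp, hwS⟩
    exact huniq w ⟨hwp, hmemS i p hi w hwp hwS⟩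
  · intro p hp v hv hvS
    obtain ⟨i, hi⟩ := (hmemP p).1 hp
    exact (hP i).2 p hi v hv (hmemS i p hi v hv hvS)
end
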